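/- arXiv:2405.17687 — 2 statements merged into one kernel-verified Lean document; each statement's English description precedes it below -/
import Mathlib

section
/- Let d ≥ 2. There exists a constant c depending only on d such that for all x_1 ∈ ℝ^d and all s_1, …, s_d ∈ [0,∞), ∫_{ℝ^d} ⋯ ∫_{ℝ^d} h((x_1,s_1),…,(x_d,s_d)) dx_2 ⋯ dx_d ≤ c·∏_{i=1}^d (1 ∨ s_i^{d−1}). -/
open MeasureTheory Filter Set Metric
open scoped ENNReal Topology Classical

noncomputable section

/-- The `d`-th (last) coordinate of a point of `ℝ^d`. -/
def lastCoord {d : ℕ} (x : EuclideanSpace ℝ (Fin d)) : ℝ :=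
  if h : 0 < d then x ⟨d - 1, Nat.sub_lt h one_pos⟩ else 0

/-- The indicator `h((x₁,s₁),…,(x_d,s_d))`: it equals `1` iff the `d`-th coordinate of `x₁`
is minimal among the centres, the boundary spheres `∂B(x_i,s_i)` intersect in exactly two
points, and the `d`-th coordinate of `x₁` is strictly below that of the higher of the two
intersection points. Here the first marked point is `x₁` and the remaining `d-1` marked
points are given by `y`. -/
def hInd (d : ℕ) (x₁ : EuclideanSpace ℝ (Fin d) × ℝ)
    (y : Fin (d - 1) → EuclideanSpace ℝ (Fin d) × ℝ) : ℝ :=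
  if ((∀ i, lastCoord x₁.1 ≤ lastCoord (y i).1) ∧
      (Metric.sphere x₁.1 x₁.2 ∩ ⋂ i, Metric.sphere (y i).1 (y i).2).encard = 2 ∧
      ∃ w ∈ Metric.sphere x₁.1 x₁.2 ∩ ⋂ i, Metric.sphere (y i).1 (y i).2,
        lastCoord x₁.1 < lastCoord w)
  then 1 else 0

namespace HIndProof

variable {d : ℕ}

def latt (d : ℕ) (q : Fin d → ℤ) : EuclideanSpace ℝ (Fin d) := WithLp.toLp 2 (fun j => (q j : ℝ))

lemma coord_dist_le (x y : EuclideanSpace ℝ (Fin d)) (j : Fin d) :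
    |x j - y j| ≤ dist x y := by
  rw [EuclideanSpace.dist_eq, ← Real.sqrt_sq_eq_abs]
  apply Real.sqrt_le_sqrt
  calc (x j - y j) ^ 2 = dist (x j) (y j) ^ 2 := by rw [Real.dist_eq, sq_abs]
    _ ≤ ∑ i, dist (x i) (y i) ^ 2 :=
      Finset.single_le_sum (f := fun i => dist (x i) (y i) ^ 2)
        (fun i _ => sq_nonneg _) (Finset.mem_univ j)

lemma dist_latt_floor_le (w : EuclideanSpace ℝ (Fin d)) :
    dist (latt d fun j => ⌊w j⌋) w ≤ Real.sqrt d := by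
  rw [EuclideanSpace.dist_eq]
  apply Real.sqrt_le_sqrt
  have h : ∀ j : Fin d, dist ((latt d fun j => ⌊w j⌋) j) (w j) ^ 2 ≤ 1 := by
    intro j
    have h1 : (latt d fun j => ⌊w j⌋) j = ((⌊w j⌋ : ℤ) : ℝ) := rfl
    rw [h1, Real.dist_eq]
    have h2 : |((⌊w j⌋ : ℤ) : ℝ) - w j| ≤ 1 := by
      rw [abs_le]
      constructor
      · linarith [Int.lt_floor_add_one (w j)]
      · linarith [Int.floor_le (w j)]
    calc |((⌊w j⌋ : ℤ) : ℝ) - w j| ^ 2 ≤ 1 ^ 2 := pow_le_pow_left₀ (abs_nonneg _) h2 2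
      _ = 1 := one_pow 2
  calc ∑ j, dist ((latt d fun j => ⌊w j⌋) j) (w j) ^ 2 ≤ ∑ _j : Fin d, (1 : ℝ) :=
      Finset.sum_le_sum fun j _ => h j
    _ = d := by simp

lemma one_le_dist_latt {q q' : Fin d → ℤ} (h : q ≠ q') :
    1 ≤ dist (latt d q) (latt d q') := by
  obtain ⟨j, hj⟩ := Function.ne_iff.1 h
  have h1 : (1 : ℝ) ≤ |(q j : ℝ) - (q' j : ℝ)| := by
    have h2 : (1 : ℤ) ≤ |q j - q' j| := Int.one_le_abs (sub_ne_zero.2 hj)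
    calc (1 : ℝ) = ((1 : ℤ) : ℝ) := by norm_num
      _ ≤ ((|q j - q' j| : ℤ) : ℝ) := by exact_mod_cast h2
      _ = |(q j : ℝ) - (q' j : ℝ)| := by push_cast [Int.cast_abs]; ring_nf
  exact h1.trans (coord_dist_le (latt d q) (latt d q') j)

lemma latt_shell_finite (x : EuclideanSpace ℝ (Fin d)) (R : ℝ) :
    {q : Fin d → ℤ | dist (latt d q) x ≤ R}.Finite := by
  apply Set.Finite.subset (Set.Finite.pi (fun j => Set.finite_Icc (⌈x j - R⌉) (⌊x j + R⌋)))
  intro q hq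
  simp only [Set.mem_pi, Set.mem_univ, forall_true_left, Set.mem_Icc]
  intro j
  have h1 : |(q j : ℝ) - x j| ≤ R := (coord_dist_le (latt d q) x j).trans hq
  rw [abs_le] at h1
  constructor
  · rw [Int.ceil_le]; linarith [h1.1]
  · rw [Int.le_floor]; linarith [h1.2]

lemma pow_diff_bound (d : ℕ) {a s : ℝ} (ha : 0 ≤ a) (hs : 0 ≤ s) :
    (s + a) ^ d - max 0 (s - a) ^ d ≤ (2 * a + 1) ^ d * max 1 (s ^ (d - 1)) := by
  set t := max 0 (s - a) with htdef
  have ht0 : 0 ≤ t := le_max_left _ _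
  have hts : t ≤ s := max_le hs (by linarith)
  set b := s + a - t with hbdef
  have hb0 : 0 ≤ b := by rw [hbdef]; linarith
  have hb2a : b ≤ 2 * a := by
    rcases le_or_gt (s - a) 0 with h | h
    · have ht : t = 0 := max_eq_left h
      rw [hbdef, ht]; linarith
    · have ht : t = s - a := max_eq_right h.le
      rw [hbdef, ht]; linarith
  have hM : ∀ k, k ≤ d - 1 → t ^ k ≤ max 1 (s ^ (d - 1)) := by
    intro k hk
    rcases le_or_gt t 1 with h | h
    · exact le_trans (pow_le_one₀ ht0 h) (le_max_left _ _)
    · calc t ^ k ≤ t ^ (d - 1) := pow_le_pow_right₀ h.le hk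
        _ ≤ s ^ (d - 1) := pow_le_pow_left₀ ht0 hts _
        _ ≤ max 1 (s ^ (d - 1)) := le_max_right _ _
  have key : (s + a) ^ d - t ^ d
      = ∑ k ∈ Finset.range d, t ^ k * b ^ (d - k) * (d.choose k : ℝ) := by
    have h1 : s + a = t + b := by rw [hbdef]; ring
    rw [h1, add_pow, Finset.sum_range_succ, Nat.sub_self, pow_zero, Nat.choose_self,
      Nat.cast_one, mul_one, mul_one, add_sub_cancel_right]
  rw [key]
  have expand : (2 * a + 1) ^ d
      = ∑ k ∈ Finset.range (d + 1), (1 : ℝ) ^ k * (2 * a) ^ (d - k) * (d.choose k : ℝ) := by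
    rw [show (2 * a + 1 : ℝ) = 1 + 2 * a by ring, add_pow]
  calc ∑ k ∈ Finset.range d, t ^ k * b ^ (d - k) * (d.choose k : ℝ)
      ≤ ∑ k ∈ Finset.range d, max 1 (s ^ (d - 1)) * ((2 * a) ^ (d - k) * (d.choose k : ℝ)) := by
        apply Finset.sum_le_sum
        intro k hk
        rw [← mul_assoc]
        have hk' : k ≤ d - 1 := by
          have := Finset.mem_range.1 hk; omega
        apply mul_le_mul_of_nonneg_right _ (Nat.cast_nonneg _)
        exact mul_le_mul (hM k hk') (pow_le_pow_left₀ hb0 hb2a _) (pow_nonneg hb0 _)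
          (le_trans zero_le_one (le_max_left _ _))
    _ = max 1 (s ^ (d - 1)) * ∑ k ∈ Finset.range d, (2 * a) ^ (d - k) * (d.choose k : ℝ) := by
        rw [Finset.mul_sum]
    _ ≤ max 1 (s ^ (d - 1)) * ∑ k ∈ Finset.range (d + 1), (2 * a) ^ (d - k) * (d.choose k : ℝ) := by
        apply mul_le_mul_of_nonneg_left _ (le_trans zero_le_one (le_max_left _ _))
        apply Finset.sum_le_sum_of_subset_of_nonneg (Finset.range_subset_range.2 (Nat.le_succ d))
        intro k _ _
        positivity
    _ = (2 * a + 1) ^ d * max 1 (s ^ (d - 1)) := by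
        rw [expand, mul_comm]
        congr 1
        apply Finset.sum_congr rfl
        intro k _
        rw [one_pow, one_mul]

lemma vol_ann (hd : 0 < d) (x : EuclideanSpace ℝ (Fin d)) {a s : ℝ} (ha : 0 ≤ a) (hs : 0 ≤ s) :
    volume (closedBall x (s + a) \ ball x (s - a)) ≤
      ENNReal.ofReal ((2 * a + 1) ^ d * max 1 (s ^ (d - 1)))
        * volume (ball (0 : EuclideanSpace ℝ (Fin d)) 1) := by
  have hsa : (0 : ℝ) ≤ s + a := by linarith
  have hfr : Module.finrank ℝ (EuclideanSpace ℝ (Fin d)) = d := finrank_euclideanSpace_fin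
  rcases le_or_gt (s - a) 0 with h | h
  · rw [ball_eq_empty.2 h, diff_empty, Measure.addHaar_closedBall _ _ hsa, hfr]
    refine mul_le_mul_left (ENNReal.ofReal_le_ofReal ?_) _
    have hb := pow_diff_bound d ha hs
    rw [max_eq_left h, zero_pow (by omega : d ≠ 0), sub_zero] at hb
    exact hb
  · have hsub : ball x (s - a) ⊆ closedBall x (s + a) :=
      ball_subset_closedBall.trans (closedBall_subset_closedBall (by linarith))
    rw [measure_diff hsub measurableSet_ball.nullMeasurableSet measure_ball_lt_top.ne,
      Measure.addHaar_closedBall _ _ hsa, Measure.addHaar_ball_of_pos _ _ h, hfr,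
      ← ENNReal.sub_mul (fun _ _ => measure_ball_lt_top.ne),
      ← ENNReal.ofReal_sub _ (pow_nonneg h.le d)]
    refine mul_le_mul_left (ENNReal.ofReal_le_ofReal ?_) _
    have hb := pow_diff_bound d ha hs
    rwa [max_eq_right h.le] at hb

end HIndProof

open HIndProof

/-- Lemma `l:inth` (integrability of `h`): there is a constant `c = c(d)` such that for all
`x₁ ∈ ℝ^d` and `s₁,…,s_d ≥ 0`,
`∫⋯∫ h((x₁,s₁),…,(x_d,s_d)) dx₂⋯dx_d ≤ c·∏_{i=1}^d (1 ∨ s_i^{d-1})`. -/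
theorem hInd_integral_bound (d : ℕ) (hd : 2 ≤ d) :
    ∃ c : ℝ, ∀ (x₁ : EuclideanSpace ℝ (Fin d)) (s : Fin d → ℝ), (∀ i, 0 ≤ s i) →
      (∫ y : Fin (d - 1) → EuclideanSpace ℝ (Fin d),
          hInd d (x₁, s ⟨0, by omega⟩)
            (fun i => (y i, s ⟨(i : ℕ) + 1, by omega⟩))
          ∂(Measure.pi fun _ => volume))
        ≤ c * ∏ i : Fin d, max 1 (s i ^ (d - 1)) := by
  obtain ⟨n, rfl⟩ : ∃ n, d = n + 1 := ⟨d - 1, by omega⟩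
  set δ : ℝ := Real.sqrt ((n + 1 : ℕ) : ℝ) with hδdef
  have hδ0 : 0 ≤ δ := Real.sqrt_nonneg _
  set V : ℝ≥0∞ := volume (ball (0 : EuclideanSpace ℝ (Fin (n + 1))) 1) with hVdef
  have hV0 : V ≠ 0 := (measure_ball_pos _ _ one_pos).ne'
  have hVt : V ≠ ⊤ := measure_ball_lt_top.ne
  set v : ℝ := V.toReal with hvdef
  have hv0 : 0 ≤ v := ENNReal.toReal_nonneg
  set K : ℝ := (2 * δ + 1) ^ (n + 1) with hKdef
  have hK0 : 0 ≤ K := by positivity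
  set K' : ℝ := (2 * (δ + 1) + 1) ^ (n + 1) with hK'def
  have hK'0 : 0 ≤ K' := by positivity
  refine ⟨4 ^ (n + 1) * K' * (K * v) ^ n, ?_⟩
  intro x₁ s hs
  simp only [Nat.add_sub_cancel]
  set m : Fin (n + 1) → ℝ := fun i => max 1 (s i ^ n) with hmdef
  have hm1 : ∀ i, 1 ≤ m i := fun i => le_max_left _ _
  have hm0 : ∀ i, 0 ≤ m i := fun i => le_trans zero_le_one (hm1 i)
  set s0 : ℝ := s ⟨0, by omega⟩ with hs0def
  set σ : Fin n → ℝ := fun i => s ⟨(i : ℕ) + 1, by omega⟩ with hσdef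
  have hm0eq : m ⟨0, by omega⟩ = max 1 (s0 ^ n) := rfl
  have hmsucc : ∀ i : Fin n, m i.succ = max 1 (σ i ^ n) := fun i => rfl
  -- the lattice points
  set S : Set (Fin (n + 1) → ℤ) :=
    {q | s0 - δ ≤ dist (latt (n + 1) q) x₁ ∧ dist (latt (n + 1) q) x₁ ≤ s0 + δ} with hSdef
  have hSfin : S.Finite := (latt_shell_finite x₁ (s0 + δ)).subset (fun q hq => hq.2)
  set F : Finset (Fin (n + 1) → ℤ) := hSfin.toFinset with hFdef
  -- the dominating set
  set Ann : (Fin (n + 1) → ℤ) → Fin n → Set (EuclideanSpace ℝ (Fin (n + 1))) :=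
    fun q i => closedBall (latt (n + 1) q) (σ i + δ) \ ball (latt (n + 1) q) (σ i - δ)
    with hAnnDef
  set T : (Fin (n + 1) → ℤ) → Set (Fin n → EuclideanSpace ℝ (Fin (n + 1))) :=
    fun q => Set.pi univ (Ann q) with hTdef
  set B : Set (Fin n → EuclideanSpace ℝ (Fin (n + 1))) := ⋃ q ∈ F, T q with hBdef
  have hAnnMeas : ∀ q i, MeasurableSet (Ann q i) :=
    fun q i => measurableSet_closedBall.diff measurableSet_ball
  have hTmeas : ∀ q, MeasurableSet (T q) := fun q => MeasurableSet.univ_pi (hAnnMeas q)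
  have hBmeas : MeasurableSet B := F.measurableSet_biUnion (fun q _ => hTmeas q)
  -- volume of each annulus
  have hAnn : ∀ q i, volume (Ann q i) ≤ ENNReal.ofReal (K * m i.succ) * V := by
    intro q i
    have h := vol_ann (d := n + 1) (by omega) (latt (n + 1) q) hδ0 (hs ⟨(i : ℕ) + 1, by omega⟩)
      (a := δ) (s := σ i)
    rw [Nat.add_sub_cancel] at h
    rw [hmsucc i, ENNReal.ofReal_mul hK0]
    calc volume (Ann q i) ≤ ENNReal.ofReal ((2 * δ + 1) ^ (n + 1) * max 1 (σ i ^ n)) * V := h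
      _ = ENNReal.ofReal K * ENNReal.ofReal (max 1 (σ i ^ n)) * V := by
          rw [← ENNReal.ofReal_mul hK0]
  have hT : ∀ q, (Measure.pi fun _ => volume) (T q)
      ≤ ∏ i : Fin n, (ENNReal.ofReal (K * m i.succ) * V) := by
    intro q
    rw [hTdef]
    rw [Measure.pi_pi]
    exact Finset.prod_le_prod' fun i _ => hAnn q i
  have hBvol : (Measure.pi fun _ => volume) B
      ≤ (F.card : ℝ≥0∞) * ∏ i : Fin n, (ENNReal.ofReal (K * m i.succ) * V) := by
    calc (Measure.pi fun _ => volume) B ≤ ∑ q ∈ F, (Measure.pi fun _ => volume) (T q) :=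
        measure_biUnion_finset_le F T
      _ ≤ ∑ _q ∈ F, ∏ i : Fin n, (ENNReal.ofReal (K * m i.succ) * V) :=
        Finset.sum_le_sum fun q _ => hT q
      _ = (F.card : ℝ≥0∞) * ∏ i : Fin n, (ENNReal.ofReal (K * m i.succ) * V) := by
        rw [Finset.sum_const, nsmul_eq_mul]
  -- counting the lattice points
  have hdisj : (↑F : Set (Fin (n + 1) → ℤ)).PairwiseDisjoint
      (fun q => closedBall (latt (n + 1) q) (1 / 4)) := by
    intro q _ q' _ hne
    apply closedBall_disjoint_closedBall
    have h := one_le_dist_latt hne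
    linarith
  have hcount : (F.card : ℝ≥0∞) * (ENNReal.ofReal ((1 / 4 : ℝ) ^ (n + 1)) * V)
      ≤ ENNReal.ofReal (K' * max 1 (s0 ^ n)) * V := by
    have hball : ∀ q, volume (closedBall (latt (n + 1) q) (1 / 4))
        = ENNReal.ofReal ((1 / 4 : ℝ) ^ (n + 1)) * V := by
      intro q
      rw [Measure.addHaar_closedBall _ _ (by norm_num : (0:ℝ) ≤ 1/4), finrank_euclideanSpace_fin]
    calc (F.card : ℝ≥0∞) * (ENNReal.ofReal ((1 / 4 : ℝ) ^ (n + 1)) * V)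
        = ∑ q ∈ F, volume (closedBall (latt (n + 1) q) (1 / 4)) := by
          rw [Finset.sum_congr rfl (fun q _ => hball q), Finset.sum_const, nsmul_eq_mul]
      _ = volume (⋃ q ∈ F, closedBall (latt (n + 1) q) (1 / 4)) :=
          (measure_biUnion_finset hdisj (fun q _ => measurableSet_closedBall)).symm
      _ ≤ volume (closedBall x₁ (s0 + (δ + 1)) \ ball x₁ (s0 - (δ + 1))) := by
          apply measure_mono
          intro z hz
          simp only [Set.mem_iUnion] at hz
          obtain ⟨q, hqF, hzq⟩ := hz
          have hq : q ∈ S := hSfin.mem_toFinset.1 hqF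
          have h1 : dist z (latt (n + 1) q) ≤ 1 / 4 := mem_closedBall.1 hzq
          constructor
          · rw [mem_closedBall]
            calc dist z x₁ ≤ dist z (latt (n + 1) q) + dist (latt (n + 1) q) x₁ :=
                dist_triangle _ _ _
              _ ≤ 1 / 4 + (s0 + δ) := add_le_add h1 hq.2
              _ ≤ s0 + (δ + 1) := by linarith
          · intro hzb
            rw [mem_ball] at hzb
            have h2 : dist (latt (n + 1) q) x₁ ≤ dist (latt (n + 1) q) z + dist z x₁ :=
              dist_triangle _ _ _
            rw [dist_comm (latt (n + 1) q) z] at h2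
            have := hq.1
            linarith
      _ ≤ ENNReal.ofReal (K' * max 1 (s0 ^ n)) * V := by
          have h := vol_ann (d := n + 1) (by omega) x₁ (a := δ + 1) (s := s0)
            (by linarith) (hs ⟨0, by omega⟩)
          rw [Nat.add_sub_cancel] at h
          exact h
  have hE4 : ENNReal.ofReal ((1 / 4 : ℝ) ^ (n + 1)) * ENNReal.ofReal ((4 : ℝ) ^ (n + 1)) = 1 := by
    rw [← ENNReal.ofReal_mul (by positivity), ← mul_pow]
    norm_num
  have hcard : (F.card : ℝ≥0∞)
      ≤ ENNReal.ofReal (K' * max 1 (s0 ^ n)) * ENNReal.ofReal ((4 : ℝ) ^ (n + 1)) := by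
    have h1 : (F.card : ℝ≥0∞) * ENNReal.ofReal ((1 / 4 : ℝ) ^ (n + 1))
        ≤ ENNReal.ofReal (K' * max 1 (s0 ^ n)) := by
      apply (ENNReal.mul_le_mul_iff_left hV0 hVt).1
      rw [mul_assoc]
      exact hcount
    calc (F.card : ℝ≥0∞)
        = (F.card : ℝ≥0∞) * (ENNReal.ofReal ((1 / 4 : ℝ) ^ (n + 1))
            * ENNReal.ofReal ((4 : ℝ) ^ (n + 1))) := by rw [hE4, mul_one]
      _ = ((F.card : ℝ≥0∞) * ENNReal.ofReal ((1 / 4 : ℝ) ^ (n + 1)))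
            * ENNReal.ofReal ((4 : ℝ) ^ (n + 1)) := by rw [mul_assoc]
      _ ≤ ENNReal.ofReal (K' * max 1 (s0 ^ n)) * ENNReal.ofReal ((4 : ℝ) ^ (n + 1)) :=
          mul_le_mul_left h1 _
  -- final volume bound
  have hprod : ∏ i : Fin n, (ENNReal.ofReal (K * m i.succ) * V)
      = ENNReal.ofReal ((∏ i : Fin n, (K * m i.succ)) * v ^ n) := by
    rw [Finset.prod_mul_distrib, Finset.prod_const, Finset.card_univ, Fintype.card_fin,
      ENNReal.ofReal_mul (Finset.prod_nonneg fun i _ => mul_nonneg hK0 (hm0 _)),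
      ENNReal.ofReal_prod_of_nonneg (fun i _ => mul_nonneg hK0 (hm0 _))]
    congr 1
    rw [ENNReal.ofReal_pow hv0, hvdef, ENNReal.ofReal_toReal hVt]
  have hBvol2 : (Measure.pi fun _ => volume) B
      ≤ ENNReal.ofReal ((4 ^ (n + 1) * K' * (K * v) ^ n) * ∏ i : Fin (n + 1), m i) := by
    calc (Measure.pi fun _ => volume) B
        ≤ (F.card : ℝ≥0∞) * ∏ i : Fin n, (ENNReal.ofReal (K * m i.succ) * V) := hBvol
      _ ≤ (ENNReal.ofReal (K' * max 1 (s0 ^ n)) * ENNReal.ofReal ((4 : ℝ) ^ (n + 1)))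
            * ENNReal.ofReal ((∏ i : Fin n, (K * m i.succ)) * v ^ n) := by
          rw [hprod]
          exact mul_le_mul_left hcard _
      _ = ENNReal.ofReal ((K' * max 1 (s0 ^ n)) * (4 : ℝ) ^ (n + 1)
            * ((∏ i : Fin n, (K * m i.succ)) * v ^ n)) := by
          rw [← ENNReal.ofReal_mul (by positivity), ← ENNReal.ofReal_mul (by positivity)]
      _ = ENNReal.ofReal ((4 ^ (n + 1) * K' * (K * v) ^ n) * ∏ i : Fin (n + 1), m i) := by
          congr 1
          have e1 : ∏ i : Fin n, (K * m i.succ) = K ^ n * ∏ i : Fin n, m i.succ := by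
            rw [Finset.prod_mul_distrib, Finset.prod_const, Finset.card_univ, Fintype.card_fin]
          have e2 : ∏ i : Fin (n + 1), m i = m 0 * ∏ i : Fin n, m i.succ :=
            Fin.prod_univ_succ m
          have e0 : (⟨0, by omega⟩ : Fin (n + 1)) = 0 := by
            apply Fin.ext
            simp
          have e3 : m 0 = max 1 (s0 ^ n) := by rw [← e0]
          rw [e1, e2, e3, mul_pow]
          ring
  -- the pointwise bound
  have hle : ∀ y : Fin n → EuclideanSpace ℝ (Fin (n + 1)),
      hInd (n + 1) (x₁, s ⟨0, by omega⟩) (fun i => (y i, s ⟨(i : ℕ) + 1, by omega⟩))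
        ≤ B.indicator 1 y := by
    intro y
    unfold hInd
    split_ifs with hcond
    · obtain ⟨-, -, w, hw, -⟩ := hcond
      have hw1 : dist w x₁ = s0 := mem_sphere.1 hw.1
      have hw2 : ∀ i : Fin n, dist w (y i) = σ i := by
        intro i
        exact mem_sphere.1 (Set.mem_iInter.1 hw.2 i)
      set q : Fin (n + 1) → ℤ := fun j => ⌊w j⌋ with hqdef
      have hwq : dist (latt (n + 1) q) w ≤ δ := dist_latt_floor_le w
      have hqS : q ∈ F := by
        rw [hFdef, hSfin.mem_toFinset]
        constructor
        · have h2 : dist w x₁ ≤ dist w (latt (n + 1) q) + dist (latt (n + 1) q) x₁ :=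
            dist_triangle _ _ _
          rw [dist_comm w (latt (n + 1) q)] at h2
          rw [hw1] at h2
          linarith
        · calc dist (latt (n + 1) q) x₁ ≤ dist (latt (n + 1) q) w + dist w x₁ :=
            dist_triangle _ _ _
            _ ≤ δ + s0 := by rw [hw1]; exact add_le_add_left hwq _
            _ = s0 + δ := by ring
      have hyT : y ∈ T q := by
        rw [hTdef]
        intro i _
        constructor
        · rw [mem_closedBall]
          calc dist (y i) (latt (n + 1) q) ≤ dist (y i) w + dist w (latt (n + 1) q) :=
              dist_triangle _ _ _
            _ ≤ σ i + δ := by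
                rw [dist_comm (y i) w, hw2 i, dist_comm w (latt (n + 1) q)]
                exact add_le_add_right hwq _
        · intro hb
          rw [mem_ball] at hb
          have h3 : dist w (y i) ≤ dist w (latt (n + 1) q) + dist (latt (n + 1) q) (y i) :=
            dist_triangle _ _ _
          rw [hw2 i, dist_comm w (latt (n + 1) q), dist_comm (latt (n + 1) q) (y i)] at h3
          linarith
      have hyB : y ∈ B := by
        rw [hBdef]
        exact Set.mem_biUnion hqS hyT
      rw [Set.indicator_of_mem hyB]
      exact le_refl 1
    · exact Set.indicator_nonneg (fun _ _ => zero_le_one) y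
  -- integrability of the dominating function
  have hBfin : (Measure.pi fun _ => volume) B < ⊤ :=
    lt_of_le_of_lt hBvol2 ENNReal.ofReal_lt_top
  have hInt : Integrable (B.indicator (1 : (Fin n → EuclideanSpace ℝ (Fin (n + 1))) → ℝ))
      (Measure.pi fun _ => volume) := by
    rw [integrable_indicator_iff hBmeas]
    exact integrableOn_const hBfin.ne
  -- conclude
  calc (∫ y : Fin n → EuclideanSpace ℝ (Fin (n + 1)),
        hInd (n + 1) (x₁, s ⟨0, by omega⟩) (fun i => (y i, s ⟨(i : ℕ) + 1, by omega⟩))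
        ∂(Measure.pi fun _ => volume))
      ≤ ∫ y, B.indicator 1 y ∂(Measure.pi fun _ => volume) := by
        apply integral_mono_of_nonneg
        · apply ae_of_all
          intro y
          rw [Pi.zero_apply]
          unfold hInd
          dsimp only
          split_ifs <;> norm_num
        · exact hInt
        · exact ae_of_all _ hle
    _ = ((Measure.pi fun _ => volume) B).toReal := integral_indicator_one hBmeas
    _ ≤ (4 ^ (n + 1) * K' * (K * v) ^ n) * ∏ i : Fin (n + 1), m i := by
        apply ENNReal.toReal_le_of_le_ofReal _ hBvol2
        have : 0 ≤ ∏ i : Fin (n + 1), m i := Finset.prod_nonneg fun i _ => hm0 i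
        positivity

end
end

section
/- Let d = 2, let A ⊂ ℝ² be polygonal with vertices q_1,…,q_κ, let k ∈ ℕ, let Y be a nonnegative random variable with 0 < E[Y^γ] < ∞ for some γ > 2, let β ∈ ℝ, and let (r_n)_{n>0} satisfy n·π·r_n²·E[Y²] − log n − (2k−1)·log log n → β as n → ∞. Then there exists ζ_0 > 0 (depending on A, the law of Y and k) such that for every ζ ∈ (0,ζ_0), setting Q_n := (⋃_{j=1}^κ B(q_j, n^{3ζ}·r_n)) ∩ A, one has Pr[Q_n ⊆ Z_n°(U_{n,A})] → 1 as n → ∞. -/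
open MeasureTheory Filter Set Metric ProbabilityTheory
open scoped Pointwise ENNReal NNReal Topology

noncomputable section

/-- `ω_d`, the volume of the unit ball in `ℝ^d` (with `ω_0 = 1`). -/
def ballVol (d : ℕ) : ℝ := Real.pi ^ ((d : ℝ) / 2) / Real.Gamma (1 + (d : ℝ) / 2)

/-- The constant `c_d = (1/d!)·(√π·Γ(1+d/2)/Γ((d+1)/2))^{d-1}`. -/
def cConst (d : ℕ) : ℝ :=
  (1 / (d.factorial : ℝ)) *
    (Real.sqrt Real.pi * Real.Gamma (1 + (d : ℝ) / 2) / Real.Gamma (((d : ℝ) + 1) / 2)) ^ (d - 1)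

/-- Intensity measure `n·Leb_d|_D ⊗ μ_Y` of the marked Poisson process `U_{n,D}`. -/
def mppIntensity (d : ℕ) (n : ℝ) (D : Set (EuclideanSpace ℝ (Fin d))) (μY : Measure ℝ) :
    Measure (EuclideanSpace ℝ (Fin d) × ℝ) :=
  ((ENNReal.ofReal n) • (volume.restrict D)).prod μY

/-- `η` is (a realization of) a marked Poisson point process with intensity measure `ι`
under the probability measure `P`: the numbers of points of `η` lying in disjoint
measurable sets are independent, Poisson distributed with the means given by `ι`. -/
def IsMarkedPoissonPP {Ω : Type*} [MeasurableSpace Ω] (P : Measure Ω) {d : ℕ}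
    (ι : Measure (EuclideanSpace ℝ (Fin d) × ℝ))
    (η : Ω → Set (EuclideanSpace ℝ (Fin d) × ℝ)) : Prop :=
  IsProbabilityMeasure P ∧
    (∀ B : Set (EuclideanSpace ℝ (Fin d) × ℝ), MeasurableSet B → ι B ≠ ∞ →
      ∀ m : ℕ, P {ω | (η ω ∩ B).encard = m} =
        ENNReal.ofReal (Real.exp (-(ι B).toReal) * (ι B).toReal ^ m / m.factorial)) ∧
    (∀ (m : ℕ) (B : Fin m → Set (EuclideanSpace ℝ (Fin d) × ℝ)), (∀ i, MeasurableSet (B i)) →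
      Pairwise (Function.onFun Disjoint B) →
      iIndepFun (m := fun _ => (⊤ : MeasurableSpace ℕ∞)) (fun i ω => (η ω ∩ B i).encard) P)

/-- The region covered at least `k` times by the closed balls `B(x, r·s)`, `(x,s) ∈ X`. -/
def coveredK (d k : ℕ) (r : ℝ) (X : Set (EuclideanSpace ℝ (Fin d) × ℝ)) :
    Set (EuclideanSpace ℝ (Fin d)) :=
  {y | ∃ F : Finset (EuclideanSpace ℝ (Fin d) × ℝ), ↑F ⊆ X ∧ k ≤ F.card ∧
    ∀ p ∈ F, y ∈ Metric.closedBall p.1 (r * p.2)}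

open scoped RealInnerProductSpace in
abbrev E2P := EuclideanSpace ℝ (Fin 2)

open scoped RealInnerProductSpace

lemma aux_moment (μY : Measure ℝ) [IsProbabilityMeasure μY] (hYnonneg : μY (Set.Iio 0) = 0)
    (γ : ℝ) (hγ : (2:ℝ) < γ) (hmomInt : Integrable (fun y : ℝ => y ^ γ) μY)
    (hmomPos : 0 < ∫ y, y ^ γ ∂μY) :
    ∃ ε : ℝ, 0 < ε ∧ 0 < (μY (Set.Ioi ε)).toReal ∧ Integrable (fun y : ℝ => y ^ 2) μY ∧
      0 < ∫ y, y ^ 2 ∂μY := by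
  have hae : ∀ᵐ y ∂μY, 0 ≤ y := by
    rw [ae_iff]
    convert hYnonneg using 2
    ext y; simp [not_le, Set.mem_Iio]
  -- integrability of y^2
  have hint2 : Integrable (fun y : ℝ => y ^ 2) μY := by
    have hg : Integrable (fun y : ℝ => 1 + y ^ γ) μY := (integrable_const 1).add hmomInt
    refine hg.mono ?_ ?_
    · exact (continuous_pow 2).aestronglyMeasurable
    · filter_upwards [hae] with y hy
      have hγ0 : (0:ℝ) ≤ y ^ γ := Real.rpow_nonneg hy γ
      have h2 : y ^ 2 ≤ 1 + y ^ γ := by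
        rcases le_or_gt y 1 with h1 | h1
        · have : y ^ 2 ≤ 1 := pow_le_one₀ hy h1
          linarith
        · have : y ^ (2:ℝ) ≤ y ^ γ :=
            Real.rpow_le_rpow_of_exponent_le h1.le hγ.le
          rw [show ((2:ℝ)) = ((2:ℕ):ℝ) by norm_num, Real.rpow_natCast] at this
          linarith
      have h20 : (0:ℝ) ≤ y ^ 2 := sq_nonneg y
      simp only [Real.norm_eq_abs, abs_of_nonneg h20, abs_of_nonneg (by linarith : (0:ℝ) ≤ 1 + y ^ γ)]
      exact h2
  -- exists ε with positive mass above
  have hex : ∃ ε : ℝ, 0 < ε ∧ μY (Set.Ioi ε) ≠ 0 := by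
    by_contra hcon
    push_neg at hcon
    have h0 : μY (Set.Ioi (0:ℝ)) = 0 := by
      have hU : Set.Ioi (0:ℝ) = ⋃ n : ℕ, Set.Ioi (((n:ℝ)+1)⁻¹) := by
        ext x
        simp only [Set.mem_Ioi, Set.mem_iUnion]
        constructor
        · intro hx
          obtain ⟨n, hn⟩ := exists_nat_gt x⁻¹
          exact ⟨n, by
            rw [inv_lt_comm₀ (by positivity) hx]
            exact hn.trans (by linarith)⟩
        · rintro ⟨n, hn⟩
          exact lt_trans (by positivity) hn
      rw [hU]
      exact measure_iUnion_null fun n => hcon _ (by positivity)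
    have hzero : ∀ᵐ y ∂μY, y = 0 := by
      have h1 : ∀ᵐ y ∂μY, ¬ (0 < y) := by
        rw [ae_iff]; convert h0 using 2; ext y; simp
      filter_upwards [hae, h1] with y hy1 hy2
      linarith [not_lt.mp hy2]
    have : (∫ y, y ^ γ ∂μY) = 0 := by
      refine integral_eq_zero_of_ae ?_
      filter_upwards [hzero] with y hy
      simp [hy, Real.zero_rpow (show γ ≠ 0 by linarith)]
    linarith
  obtain ⟨ε, hε, hne⟩ := hex
  have hfin : μY (Set.Ioi ε) ≠ ∞ := (measure_lt_top μY _).ne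
  have hpos : 0 < (μY (Set.Ioi ε)).toReal := ENNReal.toReal_pos hne hfin
  refine ⟨ε, hε, hpos, hint2, ?_⟩
  have h1 : ∫ y in Set.Ioi ε, y ^ 2 ∂μY ≤ ∫ y, y ^ 2 ∂μY := by
    apply setIntegral_le_integral hint2
    filter_upwards [hae] with y hy
    exact sq_nonneg y
  have h2 : ε ^ 2 * (μY (Set.Ioi ε)).toReal ≤ ∫ y in Set.Ioi ε, y ^ 2 ∂μY := by
    have := setIntegral_mono_on (μ := μY) (s := Set.Ioi ε)
      (f := fun _ => ε ^ 2) (g := fun y : ℝ => y ^ 2)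
      (integrableOn_const (measure_lt_top μY _).ne)
      hint2.integrableOn measurableSet_Ioi
      (fun y hy => by
        have : ε ≤ y := (Set.mem_Ioi.mp hy).le
        exact pow_le_pow_left₀ hε.le this 2)
    rw [setIntegral_const] at this
    calc ε ^ 2 * (μY (Set.Ioi ε)).toReal = (μY (Set.Ioi ε)).toReal • ε ^ 2 := by
          rw [smul_eq_mul]; ring
      _ ≤ _ := this
  have : 0 < ε ^ 2 * (μY (Set.Ioi ε)).toReal := by positivity
  linarith

lemma polygon_density (A : Set E2P)
    (hAcpt : IsCompact A) (hAcl : A = closure (interior A))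
    (m : ℕ) (u v : Fin m → E2P)
    (hedges : frontier A = ⋃ i, segment ℝ (u i) (v i)) :
    ∃ c : ℝ, 0 < c ∧ ∃ ρ₀ : ℝ, 0 < ρ₀ ∧ ∀ y ∈ A, ∀ ρ : ℝ, 0 < ρ → ρ ≤ ρ₀ →
      ENNReal.ofReal (c * ρ ^ 2) ≤ volume (Metric.closedBall y ρ ∩ A) := by
  classical
  rcases Set.eq_empty_or_nonempty A with hA | hAne
  · exact ⟨1, one_pos, 1, one_pos, by simp [hA]⟩
  -- normal vectors and affine functionals
  set w : Fin m → E2P := fun i => if u i = v i then EuclideanSpace.single 0 1 else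
    (WithLp.equiv 2 (Fin 2 → ℝ)).symm ![-((v i - u i) 1), (v i - u i) 0] with hw
  set ℓ : Fin m → E2P → ℝ := fun i x => ⟪w i, x⟫ - ⟪w i, u i⟫ with hℓ
  have hw0 : ∀ i, w i ≠ 0 := by
    intro i
    by_cases h : u i = v i
    · simp only [hw, if_pos h]
      intro hcon
      have := congrFun (congrArg (fun (x : E2P) => (x : Fin 2 → ℝ)) hcon) 0
      simp [EuclideanSpace.single_apply] at this
    · simp only [hw, if_neg h]
      intro hcon
      apply h
      have h0 := congrFun (congrArg (fun (x : E2P) => (x : Fin 2 → ℝ)) hcon) 0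
      have h1 := congrFun (congrArg (fun (x : E2P) => (x : Fin 2 → ℝ)) hcon) 1
      simp [WithLp.equiv_symm_apply, PiLp.toLp_apply] at h0 h1
      have : v i - u i = 0 := by
        ext j
        fin_cases j
        · show (v i - u i) 0 = (0 : E2P) 0
          simp only [PiLp.sub_apply, PiLp.zero_apply]
          linarith
        · show (v i - u i) 1 = (0 : E2P) 1
          simp only [PiLp.sub_apply, PiLp.zero_apply]
          linarith
      have := sub_eq_zero.mp this
      exact this.symm
  have hinner_dir : ∀ i, ⟪w i, v i - u i⟫ = 0 := by
    intro i
    by_cases h : u i = v i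
    · rw [h]; simp
    · simp only [hw, if_neg h]
      rw [PiLp.inner_apply]
      simp [Fin.sum_univ_two, WithLp.equiv_symm_apply, PiLp.toLp_apply]
      ring
  have hseg : ∀ i, segment ℝ (u i) (v i) ⊆ {x | ℓ i x = 0} := by
    intro i x hx
    obtain ⟨a, b, ha, hb, hab, hx⟩ := hx
    simp only [Set.mem_setOf_eq, hℓ, sub_eq_zero]
    have : x - u i = b • (v i - u i) := by
      rw [← hx]
      have : a = 1 - b := by linarith
      rw [this]
      module
    calc ⟪w i, x⟫ = ⟪w i, u i⟫ + ⟪w i, x - u i⟫ := by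
          rw [inner_sub_right]; ring
      _ = ⟪w i, u i⟫ := by
          rw [this, inner_smul_right, hinner_dir]; ring
  have hlin : ∀ i, IsLinearMap ℝ (fun x : E2P => ⟪w i, x⟫) :=
    fun i => ⟨fun x y => inner_add_right _ _ _, fun c x => real_inner_smul_right _ _ _⟩
  have hcont : ∀ i, Continuous (ℓ i) :=
    fun i => (continuous_const.inner continuous_id).sub continuous_const
  -- lines are null
  have hnull : ∀ i, volume {x : E2P | ℓ i x = 0} = 0 := by
    intro i
    have hww : ⟪w i, w i⟫ ≠ 0 := inner_self_ne_zero.mpr (hw0 i)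
    set ci := ⟪w i, u i⟫ with hci
    set x₀ : E2P := (ci / ⟪w i, w i⟫) • w i with hx₀
    have hwx₀ : ⟪w i, x₀⟫ = ci := by
      rw [hx₀, real_inner_smul_right, div_mul_cancel₀ _ hww]
    set Kk : Submodule ℝ E2P := LinearMap.ker (innerSL ℝ (w i) : E2P →ₗ[ℝ] ℝ) with hK
    have hset : {x : E2P | ℓ i x = 0} = (fun x => x + (-x₀)) ⁻¹' (Kk : Set E2P) := by
      ext x
      simp only [Set.mem_setOf_eq, Set.mem_preimage, hℓ, SetLike.mem_coe, hK,
        LinearMap.mem_ker, sub_eq_zero]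
      rw [show x + -x₀ = x - x₀ by abel]
      constructor
      · intro h
        show ⟪w i, x - x₀⟫ = 0
        rw [inner_sub_right, hwx₀, h]; ring
      · intro h
        have : ⟪w i, x - x₀⟫ = 0 := h
        rw [inner_sub_right, hwx₀] at this
        linarith
    rw [hset]
    rw [measure_preimage_add_right]
    apply Measure.addHaar_submodule
    intro hcon
    have : w i ∈ Kk := hcon ▸ Submodule.mem_top
    rw [hK, LinearMap.mem_ker] at this
    exact hww this
  set L : Set E2P := ⋃ i, {x : E2P | ℓ i x = 0} with hLdef
  have hLnull : volume L = 0 := measure_iUnion_null hnull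
  have hfr : frontier A ⊆ L := by
    rw [hedges]
    exact Set.iUnion_mono fun i => (hseg i).trans (by exact fun x hx => Set.mem_setOf_eq ▸ hx) |>.trans (le_refl _) |>.trans (le_refl _)
  -- cells of the line arrangement
  set cell : (Fin m → Bool) → Set E2P := fun σ =>
    ⋂ i, (if σ i then {x : E2P | 0 < ℓ i x} else {x : E2P | ℓ i x < 0}) with hcelldef
  have hconv : ∀ σ, Convex ℝ (cell σ) := by
    intro σ
    apply convex_iInter
    intro i
    by_cases h : σ i
    · simp only [h, if_true]
      have : {x : E2P | 0 < ℓ i x} = {x : E2P | ⟪w i, u i⟫ < ⟪w i, x⟫} := by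
        ext x; simp only [Set.mem_setOf_eq, hℓ, sub_pos]
      rw [this]
      exact convex_halfSpace_gt (hlin i) _
    · simp only [h, if_false]
      have : {x : E2P | ℓ i x < 0} = {x : E2P | ⟪w i, x⟫ < ⟪w i, u i⟫} := by
        ext x; simp only [Set.mem_setOf_eq, hℓ, sub_neg]
      rw [this]
      exact convex_halfSpace_lt (hlin i) _
  have hopen : ∀ σ, IsOpen (cell σ) := by
    intro σ
    apply isOpen_iInter_of_finite
    intro i
    by_cases h : σ i
    · simp only [h, if_true]
      exact isOpen_lt continuous_const (hcont i)
    · simp only [h, if_false]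
      exact isOpen_lt (hcont i) continuous_const
  have hcellL : ∀ σ, ∀ x ∈ cell σ, x ∉ L := by
    intro σ x hx hxL
    rw [hLdef, Set.mem_iUnion] at hxL
    obtain ⟨i, hi⟩ := hxL
    have hxi := Set.mem_iInter.mp hx i
    rw [Set.mem_setOf_eq] at hi
    rcases Bool.eq_false_or_eq_true (σ i) with h | h <;>
      rw [h] at hxi <;> simp only [Bool.false_eq_true, if_false, if_true, Set.mem_setOf_eq] at hxi <;>
      linarith
  have hcellsub : ∀ σ, (cell σ ∩ interior A).Nonempty → cell σ ⊆ interior A := by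
    intro σ hne
    have hfreq : frontier A = A \ interior A := hAcpt.isClosed.frontier_eq
    have hsub : cell σ ⊆ interior A ∪ Aᶜ := by
      intro x hx
      by_cases hxA : x ∈ A
      · left
        by_contra hxint
        have : x ∈ frontier A := hfreq ▸ ⟨hxA, hxint⟩
        exact hcellL σ x hx (hfr this)
      · right; exact hxA
    intro x hx
    rcases hsub hx with h | h
    · exact h
    · exfalso
      have hpre := (hconv σ).isPreconnected
      have := hpre (interior A) Aᶜ isOpen_interior hAcpt.isClosed.isOpen_compl hsub
        hne ⟨x, hx, h⟩
      obtain ⟨z, _, hz1, hz2⟩ := this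
      exact hz2 (interior_subset hz1)
  -- the good cells
  set Sf : Finset (Fin m → Bool) :=
    Finset.univ.filter (fun σ => (cell σ ∩ interior A).Nonempty) with hSf
  set K : Set E2P := ⋃ σ ∈ Sf, closure (cell σ) with hKdef
  have hKclosed : IsClosed K :=
    Set.Finite.isClosed_biUnion Sf.finite_toSet (fun _ _ => isClosed_closure)
  have hsub1 : interior A \ L ⊆ K := by
    intro x ⟨hxint, hxL⟩
    set σ : Fin m → Bool := fun i => decide (0 < ℓ i x) with hσ
    have hxcell : x ∈ cell σ := by
      apply Set.mem_iInter.mpr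
      intro i
      have hne0 : ℓ i x ≠ 0 := by
        intro h
        exact hxL (Set.mem_iUnion.mpr ⟨i, h⟩)
      by_cases h : 0 < ℓ i x
      · simp [hσ, h]
      · have : ℓ i x < 0 := lt_of_le_of_ne (not_lt.mp h) hne0
        simp [hσ, not_lt.mp h, this, decide_eq_false_iff_not.mpr h]
    have hσSf : σ ∈ Sf := by
      rw [hSf, Finset.mem_filter]
      exact ⟨Finset.mem_univ _, ⟨x, hxcell, hxint⟩⟩
    exact Set.mem_biUnion hσSf (subset_closure hxcell)
  have hsub2 : interior A ⊆ closure (interior A \ L) := by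
    intro z hz
    rw [_root_.mem_closure_iff]
    intro O hO hzO
    have hU : IsOpen (O ∩ interior A) := hO.inter isOpen_interior
    have hUne : (O ∩ interior A).Nonempty := ⟨z, hzO, hz⟩
    have hvol : 0 < volume (O ∩ interior A) := hU.measure_pos volume hUne
    have : ¬ (O ∩ interior A ⊆ L) := by
      intro hcon
      have hle : volume (O ∩ interior A) ≤ volume L := measure_mono hcon
      rw [hLnull] at hle
      exact absurd (le_antisymm hle zero_le) (ne_of_gt hvol)
    obtain ⟨x, hx1, hx2⟩ := Set.not_subset.mp this
    exact ⟨x, hx1.1, hx1.2, hx2⟩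
  have hAK : A ⊆ K := by
    rw [hAcl]
    refine closure_minimal ?_ hKclosed
    exact fun z hz => (closure_minimal hsub1 hKclosed) (hsub2 hz)
  have hSfne : Sf.Nonempty := by
    obtain ⟨a, ha⟩ := hAne
    have := hAK ha
    rw [hKdef, Set.mem_iUnion₂] at this
    obtain ⟨σ, hσ, _⟩ := this
    exact ⟨σ, hσ⟩
  -- quantities for each good cell
  have hcellprops : ∀ σ ∈ Sf, (cell σ).Nonempty ∧ cell σ ⊆ A ∧ Bornology.IsBounded (cell σ) := by
    intro σ hσ
    rw [hSf, Finset.mem_filter] at hσ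
    obtain ⟨-, hne⟩ := hσ
    have hsubA : cell σ ⊆ A := (hcellsub σ hne).trans interior_subset
    exact ⟨hne.mono Set.inter_subset_left, hsubA, hAcpt.isBounded.subset hsubA⟩
  have hdiam_pos : ∀ σ ∈ Sf, 0 < Metric.diam (cell σ) := by
    intro σ hσ
    obtain ⟨⟨x, hx⟩, -, hbdd⟩ := hcellprops σ hσ
    obtain ⟨ε, hε, hball⟩ := Metric.isOpen_iff.mp (hopen σ) x hx
    set x' : E2P := x + EuclideanSpace.single 0 (ε/2) with hx'def
    have hdist : dist x' x = ε / 2 := by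
      rw [dist_eq_norm, hx'def, add_sub_cancel_left, EuclideanSpace.norm_single]
      rw [Real.norm_eq_abs, abs_of_pos (by linarith)]
    have hx' : x' ∈ cell σ := hball (by rw [Metric.mem_ball, hdist]; linarith)
    have := Metric.dist_le_diam_of_mem hbdd hx' hx
    linarith
  have hvol_pos : ∀ σ ∈ Sf, 0 < volume (cell σ) := by
    intro σ hσ
    exact (hopen σ).measure_pos volume (hcellprops σ hσ).1
  have hvol_fin : ∀ σ ∈ Sf, volume (cell σ) ≠ ∞ := by
    intro σ hσ
    exact ((measure_mono (hcellprops σ hσ).2.1).trans_lt hAcpt.measure_lt_top).ne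
  -- the constants
  set cc : (Fin m → Bool) → ℝ := fun σ => (volume (cell σ)).toReal / (Metric.diam (cell σ))^2
    with hccdef
  set c : ℝ := Sf.inf' hSfne cc with hcdef
  set ρ₀ : ℝ := Sf.inf' hSfne (fun σ => Metric.diam (cell σ)) with hρ₀def
  have hccpos : ∀ σ ∈ Sf, 0 < cc σ := by
    intro σ hσ
    apply div_pos
    · exact ENNReal.toReal_pos (hvol_pos σ hσ).ne' (hvol_fin σ hσ)
    · exact pow_pos (hdiam_pos σ hσ) 2
  have hcpos : 0 < c := by
    rw [hcdef, Finset.lt_inf'_iff]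
    exact hccpos
  have hρ₀pos : 0 < ρ₀ := by
    rw [hρ₀def, Finset.lt_inf'_iff]
    exact hdiam_pos
  refine ⟨c, hcpos, ρ₀, hρ₀pos, ?_⟩
  intro y hy ρ hρ hρle
  -- find the good cell whose closure contains y
  have hyK := hAK hy
  rw [hKdef, Set.mem_iUnion₂] at hyK
  obtain ⟨σ, hσSf, hyσ⟩ := hyK
  set C : Set E2P := cell σ with hC
  set d : ℝ := Metric.diam C with hd
  have hdpos : 0 < d := hdiam_pos σ hσSf
  have hρd : ρ ≤ d := hρle.trans (Finset.inf'_le _ hσSf)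
  set t : ℝ := ρ / d with ht
  have htpos : 0 < t := div_pos hρ hdpos
  have htle : t ≤ 1 := (div_le_one hdpos).mpr hρd
  -- homothety image
  have himg : (AffineMap.homothety y t) '' C ⊆ Metric.closedBall y ρ ∩ A := by
    rintro z ⟨x, hx, rfl⟩
    constructor
    · rw [Metric.mem_closedBall, AffineMap.homothety_apply]
      simp only [vsub_eq_sub]
      have : dist (t • (x - y) +ᵥ y) y = t * dist x y := by
        rw [dist_eq_norm]
        simp only [vadd_eq_add, add_sub_cancel_right, norm_smul, Real.norm_eq_abs,
          abs_of_pos htpos, dist_eq_norm]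
      rw [this]
      have hdxy : dist x y ≤ d := by
        rw [hd, ← Metric.diam_closure]
        exact Metric.dist_le_diam_of_mem (hcellprops σ hσSf).2.2.closure
          (subset_closure hx) hyσ
      calc t * dist x y ≤ t * d := by
            exact mul_le_mul_of_nonneg_left hdxy htpos.le
        _ = ρ := by rw [ht, div_mul_cancel₀ _ (ne_of_gt hdpos)]
    · have hcombo : (AffineMap.homothety y t) x = t • x + (1 - t) • y := by
        rw [AffineMap.homothety_apply]
        simp only [vadd_eq_add, vsub_eq_sub, smul_sub, sub_smul, one_smul]
        abel
      rw [hcombo]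
      have hxint : x ∈ interior C := by rw [(hopen σ).interior_eq]; exact hx
      have := (hconv σ).combo_interior_closure_mem_interior (a := t) (b := 1 - t)
        hxint hyσ htpos (by linarith) (by ring)
      exact (hcellprops σ hσSf).2.1 (interior_subset this)
  have hvolimg : volume ((AffineMap.homothety y t) '' C) =
      ENNReal.ofReal |t ^ Module.finrank ℝ E2P| * volume C :=
    Measure.addHaar_image_homothety volume y t C
  have hfinrank : Module.finrank ℝ E2P = 2 := finrank_euclideanSpace_fin
  calc ENNReal.ofReal (c * ρ ^ 2) ≤ ENNReal.ofReal (cc σ * ρ ^ 2) := by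
        apply ENNReal.ofReal_le_ofReal
        exact mul_le_mul_of_nonneg_right (Finset.inf'_le _ hσSf) (sq_nonneg ρ)
    _ = ENNReal.ofReal (t ^ 2 * (volume C).toReal) := by
        congr 1
        rw [hccdef]
        simp only
        rw [ht]
        field_simp
        rw [hd, hC, mul_div_cancel_right₀ _ (pow_ne_zero 2 (hdiam_pos σ hσSf).ne')]
    _ = ENNReal.ofReal (t ^ 2) * volume C := by
        rw [ENNReal.ofReal_mul (by positivity), ENNReal.ofReal_toReal (hvol_fin σ hσSf)]
    _ = ENNReal.ofReal |t ^ Module.finrank ℝ E2P| * volume C := by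
        rw [hfinrank, abs_of_nonneg (by positivity)]
    _ = volume ((AffineMap.homothety y t) '' C) := hvolimg.symm
    _ ≤ volume (Metric.closedBall y ρ ∩ A) := measure_mono himg

lemma cover_of_count (k : ℕ) (rn ε₀ : ℝ) (hrn : 0 < rn) (hε₀ : 0 < ε₀)
    (X : Set (E2P × ℝ)) (y z : E2P)
    (hyz : dist y z ≤ ε₀ * rn / 8)
    (hcount : (k : ℕ∞) ≤ (X ∩ (Metric.closedBall z (ε₀ * rn / 4) ×ˢ Set.Ioi ε₀)).encard) :
    y ∈ interior (coveredK 2 k rn X) := by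
  obtain ⟨t, hts, htk⟩ := Set.exists_subset_encard_eq hcount
  have htfin : t.Finite := Set.finite_of_encard_eq_coe htk
  set F : Finset (E2P × ℝ) := htfin.toFinset with hF
  have hFcard : F.card = k := by
    have := htfin.encard_eq_coe_toFinset_card
    rw [htk] at this
    exact_mod_cast this.symm
  have hδ : 0 < ε₀ * rn := mul_pos hε₀ hrn
  have hsub : Metric.ball y (ε₀ * rn / 8) ⊆ coveredK 2 k rn X := by
    intro y' hy'
    refine ⟨F, ?_, hFcard.ge, ?_⟩
    · intro p hp
      have hpt : p ∈ t := by
        have : (↑F : Set (E2P × ℝ)) = t := Set.Finite.coe_toFinset htfin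
        rwa [← this]
      exact (hts hpt).1
    · intro p hp
      have hpt : p ∈ t := htfin.mem_toFinset.mp hp
      obtain ⟨-, hp1, hp2⟩ := hts hpt
      rw [Metric.mem_closedBall]
      have h1 : dist y' y < ε₀ * rn / 8 := Metric.mem_ball.mp hy'
      have h2 : dist z p.1 ≤ ε₀ * rn / 4 := by rw [dist_comm]; exact hp1
      have h3 : ε₀ < p.2 := hp2
      have h4 : dist y' p.1 ≤ dist y' y + dist y z + dist z p.1 := dist_triangle4 _ _ _ _
      have h5 : rn * ε₀ ≤ rn * p.2 := mul_le_mul_of_nonneg_left h3.le hrn.le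
      nlinarith
  exact mem_interior.mpr ⟨_, hsub, Metric.isOpen_ball, Metric.mem_ball_self (by linarith)⟩

lemma abs_coord_le_norm (x : E2P) (i : Fin 2) : |x i| ≤ ‖x‖ := by
  rw [EuclideanSpace.norm_eq, ← Real.sqrt_sq_eq_abs]
  apply Real.sqrt_le_sqrt
  have : x i ^ 2 = ‖x i‖ ^ 2 := by rw [Real.norm_eq_abs, sq_abs]
  rw [this]
  exact Finset.single_le_sum (fun j _ => sq_nonneg ‖x j‖) (Finset.mem_univ i)

lemma dist_le_of_coords (y z : E2P) (h : ℝ) (hh : 0 ≤ h)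
    (h0 : |y 0 - z 0| ≤ h) (h1 : |y 1 - z 1| ≤ h) : dist y z ≤ 2 * h := by
  rw [EuclideanSpace.dist_eq]
  have : Real.sqrt ((2*h)^2) = 2*h := Real.sqrt_sq (by linarith)
  rw [← this]
  apply Real.sqrt_le_sqrt
  rw [Fin.sum_univ_two]
  have e0 : dist (y 0) (z 0) = |y 0 - z 0| := Real.dist_eq _ _
  have e1 : dist (y 1) (z 1) = |y 1 - z 1| := Real.dist_eq _ _
  rw [e0, e1]
  nlinarith [abs_nonneg (y 0 - z 0), abs_nonneg (y 1 - z 1)]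

set_option maxHeartbeats 1000000 in
lemma per_n_bound (A : Set E2P) (μY : Measure ℝ) [IsProbabilityMeasure μY]
    (k : ℕ) (hk : 1 ≤ k) (κ : ℕ) (q : Fin κ → E2P)
    (ε₀ c ρ₀ c₁ c₂ ζ : ℝ) (hε₀ : 0 < ε₀) (hc : 0 < c) (hζ : 0 < ζ)
    (n rn : ℝ) (hn1 : 1 ≤ n) (hrn : 0 < rn)
    (Ωn : Type*) [MeasurableSpace Ωn] (Pn : Measure Ωn) (ηn : Ωn → Set (E2P × ℝ))
    (hProb : IsProbabilityMeasure Pn)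
    (hPois : ∀ B : Set (E2P × ℝ), MeasurableSet B → mppIntensity 2 n A μY B ≠ ∞ →
      ∀ m : ℕ, Pn {ω | (ηn ω ∩ B).encard = m} =
        ENNReal.ofReal (Real.exp (-(mppIntensity 2 n A μY B).toReal) *
          (mppIntensity 2 n A μY B).toReal ^ m / m.factorial))
    (hgeo : ∀ y ∈ A, ∀ ρ : ℝ, 0 < ρ → ρ ≤ ρ₀ →
      ENNReal.ofReal (c * ρ ^ 2) ≤ volume (Metric.closedBall y ρ ∩ A))
    (hρsmall : ε₀ * rn / 8 ≤ ρ₀)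
    (hLB : c₁ * Real.log n ≤ n * (c * (ε₀ * rn / 8) ^ 2) * (μY (Set.Ioi ε₀)).toReal)
    (hUB : n * ((ε₀ * rn / 4) ^ 2 * (volume (Metric.ball (0:E2P) 1)).toReal) *
      (μY (Set.Ioi ε₀)).toReal ≤ c₂ * Real.log n)
    (hone : 1 ≤ c₁ * Real.log n) :
    1 - ENNReal.ofReal ((κ:ℝ) * ((32/ε₀+5) * n^(3*ζ))^2 *
        ((k:ℝ) * (n^(-c₁) * (c₂ * Real.log n)^(k-1)))) ≤
      Pn {ω | (⋃ j, Metric.closedBall (q j) (n ^ (3*ζ) * rn)) ∩ A ⊆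
        interior (coveredK 2 k rn (ηn ω))} := by
  classical
  have hn0 : 0 < n := lt_of_lt_of_le one_pos hn1
  set δ : ℝ := ε₀ * rn with hδdef
  have hδ : 0 < δ := mul_pos hε₀ hrn
  set h' : ℝ := δ / 16 with h'def
  have hh' : 0 < h' := by positivity
  set R : ℝ := n ^ (3*ζ) * rn with hRdef
  have hR : 0 < R := mul_pos (Real.rpow_pos_of_pos hn0 _) hrn
  set K : ℤ := ⌈16 * n ^ (3*ζ) / ε₀⌉ + 1 with hKdef
  set zpt : Fin κ → ℤ → ℤ → E2P := fun j a b =>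
    q j + EuclideanSpace.single 0 (h' * a) + EuclideanSpace.single 1 (h' * b) with hzpt
  set Sset : E2P → Set (E2P × ℝ) := fun z => Metric.closedBall z (δ/4) ×ˢ Set.Ioi ε₀ with hSset
  set Rel : Fin κ → ℤ → ℤ → Prop := fun j a b => ∃ y' ∈ A, dist y' (zpt j a b) ≤ δ/8 with hReldef
  set bad : Fin κ → ℤ → ℤ → Set Ωn := fun j a b =>
    {ω | Rel j a b ∧ ((ηn ω ∩ Sset (zpt j a b)).encard < (k:ℕ∞))} with hbaddef
  -- coordinates of grid points
  have hzcoord : ∀ j a b, (zpt j a b) 0 = q j 0 + h' * a ∧ (zpt j a b) 1 = q j 1 + h' * b := by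
    intro j a b
    constructor <;>
    · simp only [hzpt, PiLp.add_apply, EuclideanSpace.single_apply]
      norm_num [Fin.ext_iff]
  -- Step 1: event inclusion
  have hincl : (⋃ j : Fin κ, ⋃ a ∈ Finset.Icc (-K) K, ⋃ b ∈ Finset.Icc (-K) K, bad j a b)ᶜ ⊆
      {ω | (⋃ j, Metric.closedBall (q j) (n ^ (3*ζ) * rn)) ∩ A ⊆
        interior (coveredK 2 k rn (ηn ω))} := by
    intro ω hω
    intro y hy
    obtain ⟨hyU, hyA⟩ := hy
    rw [Set.mem_iUnion] at hyU
    obtain ⟨j, hyj⟩ := hyU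
    rw [Metric.mem_closedBall] at hyj
    set a : ℤ := ⌊(y 0 - q j 0) / h'⌋ with hadef
    set b : ℤ := ⌊(y 1 - q j 1) / h'⌋ with hbdef
    have hcoord_bound : ∀ i : Fin 2, |y i - q j i| ≤ R := by
      intro i
      have h1 : |(y - q j) i| ≤ ‖y - q j‖ := abs_coord_le_norm _ i
      rw [PiLp.sub_apply] at h1
      rw [← dist_eq_norm] at h1
      exact h1.trans hyj
    -- floor bounds
    have hfl : ∀ w : ℝ, 0 ≤ w - h' * ⌊w / h'⌋ ∧ w - h' * ⌊w / h'⌋ ≤ h' := by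
      intro w
      have h1 : (⌊w / h'⌋ : ℝ) ≤ w / h' := Int.floor_le _
      have h2 : w / h' - 1 < ⌊w / h'⌋ := Int.sub_one_lt_floor _
      constructor
      · have := mul_le_mul_of_nonneg_left h1 hh'.le
        rw [mul_div_cancel₀ _ (ne_of_gt hh')] at this
        linarith
      · have := mul_le_mul_of_nonneg_left h2.le hh'.le
        rw [mul_sub, mul_div_cancel₀ _ (ne_of_gt hh'), mul_one] at this
        linarith
    have hdistz : dist y (zpt j a b) ≤ δ / 8 := by
      have h0 := (hzcoord j a b).1
      have h1 := (hzcoord j a b).2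
      have e0 : |y 0 - (zpt j a b) 0| ≤ h' := by
        rw [h0]
        obtain ⟨hA, hB⟩ := hfl (y 0 - q j 0)
        have heq : y 0 - (q j 0 + h' * a) = (y 0 - q j 0) - h' * ⌊(y 0 - q j 0) / h'⌋ := by
          rw [hadef]; ring
        rw [heq, abs_le]
        exact ⟨by linarith, hB⟩
      have e1 : |y 1 - (zpt j a b) 1| ≤ h' := by
        rw [h1]
        obtain ⟨hA, hB⟩ := hfl (y 1 - q j 1)
        have heq : y 1 - (q j 1 + h' * b) = (y 1 - q j 1) - h' * ⌊(y 1 - q j 1) / h'⌋ := by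
          rw [hbdef]; ring
        rw [heq, abs_le]
        exact ⟨by linarith, hB⟩
      have := dist_le_of_coords y (zpt j a b) h' hh'.le e0 e1
      have h2 : 2 * h' = δ / 8 := by rw [h'def]; ring
      linarith
    -- grid membership
    have hRh : R / h' = 16 * n ^ (3*ζ) / ε₀ := by
      rw [hRdef, h'def, hδdef]
      field_simp
    have hmem : ∀ (w : ℝ), |w| ≤ R → ⌊w / h'⌋ ∈ Finset.Icc (-K) K := by
      intro w hw
      have habs := abs_le.mp hw
      have hflle : (⌊w / h'⌋ : ℝ) ≤ w / h' := Int.floor_le _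
      have hflgt : w / h' - 1 < ⌊w / h'⌋ := Int.sub_one_lt_floor _
      have hdivle : w / h' ≤ R / h' := by gcongr; exact habs.2
      have hdivge : -(R / h') ≤ w / h' := by
        rw [← neg_div]
        gcongr
        exact habs.1
      have hceil : (16 * n ^ (3*ζ) / ε₀ : ℝ) ≤ (⌈16 * n ^ (3*ζ) / ε₀⌉ : ℤ) := Int.le_ceil _
      have hKcast : (K : ℝ) = (⌈16 * n ^ (3*ζ) / ε₀⌉ : ℤ) + 1 := by
        rw [hKdef]; push_cast; ring
      rw [Finset.mem_Icc]
      constructor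
      · have : -(K:ℝ) ≤ ⌊w / h'⌋ := by
          rw [hKcast, hRh] at *
          linarith
        exact_mod_cast (by exact_mod_cast this : ((-K : ℤ) : ℝ) ≤ (⌊w / h'⌋ : ℝ))
      · have : (⌊w / h'⌋ : ℝ) ≤ (K:ℝ) := by
          rw [hKcast, hRh] at *
          linarith
        exact_mod_cast this
    have haIcc : a ∈ Finset.Icc (-K) K := hmem _ (hcoord_bound 0)
    have hbIcc : b ∈ Finset.Icc (-K) K := hmem _ (hcoord_bound 1)
    -- ω is not in the bad set
    have hnotbad : ω ∉ bad j a b := by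
      intro hcon
      apply hω
      rw [Set.mem_iUnion]
      exact ⟨j, Set.mem_biUnion haIcc (Set.mem_biUnion hbIcc hcon)⟩
    have hRel : Rel j a b := ⟨y, hyA, hdistz⟩
    have hcount : (k : ℕ∞) ≤ (ηn ω ∩ Sset (zpt j a b)).encard := by
      by_contra hlt
      exact hnotbad ⟨hRel, not_le.mp hlt⟩
    exact cover_of_count k rn ε₀ hrn hε₀ (ηn ω) y (zpt j a b) hdistz hcount
  -- Step 2: probability of each bad set
  set tb : ℝ≥0∞ := ENNReal.ofReal ((k:ℝ) * (n^(-c₁) * (c₂ * Real.log n)^(k-1))) with htbdef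
  have hbadP : ∀ j a b, Pn (bad j a b) ≤ tb := by
    intro j a b
    by_cases hRel : Rel j a b
    · -- relevant cell: Poisson bound
      set z := zpt j a b with hz
      set S := Sset z with hS
      have hSm : MeasurableSet S := measurableSet_closedBall.prod measurableSet_Ioi
      have hιS : mppIntensity 2 n A μY S =
          (ENNReal.ofReal n * volume (Metric.closedBall z (δ/4) ∩ A)) * μY (Set.Ioi ε₀) := by
        rw [hS, hSset, mppIntensity, Measure.prod_prod, Measure.smul_apply,
          Measure.restrict_apply measurableSet_closedBall, smul_eq_mul]
      have hfin : mppIntensity 2 n A μY S ≠ ∞ := by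
        rw [hιS]
        apply ENNReal.mul_ne_top
        apply ENNReal.mul_ne_top
        · exact ENNReal.ofReal_ne_top
        · exact ((measure_mono Set.inter_subset_left).trans_lt measure_closedBall_lt_top).ne
        · exact (measure_lt_top μY _).ne
      set lam : ℝ := (mppIntensity 2 n A μY S).toReal with hlam
      have hvolfin : volume (Metric.closedBall z (δ/4) ∩ A) ≠ ∞ :=
        ((measure_mono Set.inter_subset_left).trans_lt measure_closedBall_lt_top).ne
      have hlamexpr : lam = n * (volume (Metric.closedBall z (δ/4) ∩ A)).toReal *
          (μY (Set.Ioi ε₀)).toReal := by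
        rw [hlam, hιS, ENNReal.toReal_mul, ENNReal.toReal_mul,
          ENNReal.toReal_ofReal hn0.le]
      -- lower bound on lam
      have hvol_lb : c * (δ/8)^2 ≤ (volume (Metric.closedBall z (δ/4) ∩ A)).toReal := by
        obtain ⟨y', hy'A, hy'z⟩ := hRel
        have hsub : Metric.closedBall y' (δ/8) ⊆ Metric.closedBall z (δ/4) := by
          apply Metric.closedBall_subset_closedBall'
          linarith
        have h1 : ENNReal.ofReal (c * (δ/8)^2) ≤ volume (Metric.closedBall y' (δ/8) ∩ A) :=
          hgeo y' hy'A (δ/8) (by positivity) (by rw [hδdef]; exact hρsmall)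
        have h2 : volume (Metric.closedBall y' (δ/8) ∩ A) ≤
            volume (Metric.closedBall z (δ/4) ∩ A) :=
          measure_mono (Set.inter_subset_inter_left _ hsub)
        have := h1.trans h2
        rw [← ENNReal.ofReal_le_iff_le_toReal hvolfin] at *
        exact this
      have hlam_lb : c₁ * Real.log n ≤ lam := by
        rw [hlamexpr]
        calc c₁ * Real.log n ≤ n * (c * (ε₀ * rn / 8) ^ 2) * (μY (Set.Ioi ε₀)).toReal := hLB
          _ ≤ _ := by
              apply mul_le_mul_of_nonneg_right _ ENNReal.toReal_nonneg
              apply mul_le_mul_of_nonneg_left _ hn0.le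
              rw [← hδdef] at *
              exact hvol_lb
      -- upper bound on lam
      have hvol_ub : (volume (Metric.closedBall z (δ/4) ∩ A)).toReal ≤
          (δ/4)^2 * (volume (Metric.ball (0:E2P) 1)).toReal := by
        have h1 : volume (Metric.closedBall z (δ/4) ∩ A) ≤ volume (Metric.closedBall z (δ/4)) :=
          measure_mono Set.inter_subset_left
        have h2 : volume (Metric.closedBall z (δ/4)) =
            ENNReal.ofReal ((δ/4) ^ Module.finrank ℝ E2P) * volume (Metric.ball (0:E2P) 1) :=
          Measure.addHaar_closedBall volume z (by positivity)
        rw [finrank_euclideanSpace_fin] at h2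
        have h3 := (ENNReal.toReal_le_toReal hvolfin (by
          rw [h2]
          exact ENNReal.mul_ne_top ENNReal.ofReal_ne_top measure_ball_lt_top.ne)).mpr h1
        rw [h2, ENNReal.toReal_mul, ENNReal.toReal_ofReal (by positivity)] at h3
        exact h3
      have hlam_ub : lam ≤ c₂ * Real.log n := by
        rw [hlamexpr]
        calc n * (volume (Metric.closedBall z (δ/4) ∩ A)).toReal * (μY (Set.Ioi ε₀)).toReal
            ≤ n * ((ε₀ * rn / 4)^2 * (volume (Metric.ball (0:E2P) 1)).toReal) *
              (μY (Set.Ioi ε₀)).toReal := by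
              apply mul_le_mul_of_nonneg_right _ ENNReal.toReal_nonneg
              apply mul_le_mul_of_nonneg_left _ hn0.le
              rw [← hδdef] at *
              exact hvol_ub
          _ ≤ c₂ * Real.log n := hUB
      have hlam1 : 1 ≤ lam := hone.trans hlam_lb
      have hlam0 : 0 ≤ lam := zero_le_one.trans hlam1
      -- bad set is contained in union of count events
      have hsubbad : bad j a b ⊆ ⋃ i ∈ Finset.range k, {ω | (ηn ω ∩ S).encard = (i:ℕ∞)} := by
        intro ω hω
        obtain ⟨-, hlt⟩ := hω
        have hne : (ηn ω ∩ Sset (zpt j a b)).encard ≠ ⊤ :=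
          (hlt.trans_le le_top).ne
        obtain ⟨i, hi⟩ := WithTop.ne_top_iff_exists.mp hne
        have hik : i < k := by
          rw [← hi] at hlt
          exact Nat.cast_lt.mp hlt
        rw [Set.mem_iUnion₂]
        exact ⟨i, Finset.mem_range.mpr hik, hi.symm⟩
      -- each count event bounded
      have hterm : ∀ i ∈ Finset.range k,
          Pn {ω | (ηn ω ∩ S).encard = (i:ℕ∞)} ≤
            ENNReal.ofReal (n^(-c₁) * (c₂ * Real.log n)^(k-1)) := by
        intro i hi
        rw [hPois S hSm hfin i, ← hlam]
        apply ENNReal.ofReal_le_ofReal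
        have hfact : (1:ℝ) ≤ (i.factorial : ℝ) := by exact_mod_cast i.factorial_pos
        have h1 : Real.exp (-lam) * lam ^ i / (i.factorial : ℝ) ≤ Real.exp (-lam) * lam ^ i := by
          apply div_le_self (by positivity) hfact
        have h2 : lam ^ i ≤ lam ^ (k-1) := by
          apply pow_le_pow_right₀ hlam1
          have := Finset.mem_range.mp hi
          omega
        have h3 : lam ^ (k-1) ≤ (c₂ * Real.log n) ^ (k-1) :=
          pow_le_pow_left₀ hlam0 hlam_ub _
        have h4 : Real.exp (-lam) ≤ Real.exp (-(c₁ * Real.log n)) :=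
          Real.exp_le_exp.mpr (by linarith)
        have h5 : Real.exp (-(c₁ * Real.log n)) = n ^ (-c₁) := by
          rw [Real.rpow_def_of_pos hn0]
          congr 1
          ring
        calc Real.exp (-lam) * lam ^ i / (i.factorial : ℝ) ≤ Real.exp (-lam) * lam ^ i := h1
          _ ≤ Real.exp (-(c₁ * Real.log n)) * (c₂ * Real.log n) ^ (k-1) := by
              apply mul_le_mul h4 (h2.trans h3) (by positivity) (Real.exp_pos _).le
          _ = n ^ (-c₁) * (c₂ * Real.log n) ^ (k-1) := by rw [h5]
      calc Pn (bad j a b) ≤ Pn (⋃ i ∈ Finset.range k, {ω | (ηn ω ∩ S).encard = (i:ℕ∞)}) :=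
            measure_mono hsubbad
        _ ≤ ∑ i ∈ Finset.range k, Pn {ω | (ηn ω ∩ S).encard = (i:ℕ∞)} :=
            measure_biUnion_finset_le _ _
        _ ≤ ∑ _i ∈ Finset.range k, ENNReal.ofReal (n^(-c₁) * (c₂ * Real.log n)^(k-1)) :=
            Finset.sum_le_sum hterm
        _ = (k : ℝ≥0∞) * ENNReal.ofReal (n^(-c₁) * (c₂ * Real.log n)^(k-1)) := by
            rw [Finset.sum_const, Finset.card_range, nsmul_eq_mul]
        _ = tb := by
            rw [htbdef, ← ENNReal.ofReal_natCast k, ← ENNReal.ofReal_mul (by positivity)]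
    · -- irrelevant cell: bad is empty
      have : bad j a b = ∅ := by
        rw [hbaddef]
        ext ω
        simp only [Set.mem_setOf_eq, Set.mem_empty_iff_false, iff_false]
        intro hcon
        exact hRel hcon.1
      rw [this]
      simp
  -- Step 3: total union bound
  set U : Set Ωn := ⋃ j : Fin κ, ⋃ a ∈ Finset.Icc (-K) K, ⋃ b ∈ Finset.Icc (-K) K, bad j a b
    with hU
  have hKpos : 1 ≤ K := by
    rw [hKdef]
    have hx : (0:ℝ) < 16 * n ^ (3*ζ) / ε₀ := by positivity
    have h1 : (0:ℤ) < ⌈16 * n ^ (3*ζ) / ε₀⌉ := Int.ceil_pos.mpr hx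
    omega
  have hcard : (Finset.Icc (-K) K).card = (2*K+1).toNat := by
    rw [Int.card_Icc]
    congr 1
    ring
  set cnt : ℕ := (2*K+1).toNat with hcnt
  have hPU : Pn U ≤ (κ : ℝ≥0∞) * ((cnt : ℝ≥0∞)^2 * tb) := by
    have h1 : Pn U ≤ ∑ j : Fin κ,
        Pn (⋃ a ∈ Finset.Icc (-K) K, ⋃ b ∈ Finset.Icc (-K) K, bad j a b) :=
      measure_iUnion_fintype_le _ _
    have h2 : ∀ j : Fin κ,
        Pn (⋃ a ∈ Finset.Icc (-K) K, ⋃ b ∈ Finset.Icc (-K) K, bad j a b) ≤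
          (cnt : ℝ≥0∞)^2 * tb := by
      intro j
      calc Pn (⋃ a ∈ Finset.Icc (-K) K, ⋃ b ∈ Finset.Icc (-K) K, bad j a b)
          ≤ ∑ a ∈ Finset.Icc (-K) K, Pn (⋃ b ∈ Finset.Icc (-K) K, bad j a b) :=
            measure_biUnion_finset_le _ _
        _ ≤ ∑ a ∈ Finset.Icc (-K) K, ∑ b ∈ Finset.Icc (-K) K, Pn (bad j a b) :=
            Finset.sum_le_sum (fun a _ => measure_biUnion_finset_le _ _)
        _ ≤ ∑ _a ∈ Finset.Icc (-K) K, ∑ _b ∈ Finset.Icc (-K) K, tb :=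
            Finset.sum_le_sum (fun a _ => Finset.sum_le_sum (fun b _ => hbadP j a b))
        _ = (cnt : ℝ≥0∞)^2 * tb := by
            simp only [Finset.sum_const, nsmul_eq_mul, hcard]
            ring
    calc Pn U ≤ ∑ j : Fin κ,
          Pn (⋃ a ∈ Finset.Icc (-K) K, ⋃ b ∈ Finset.Icc (-K) K, bad j a b) := h1
      _ ≤ ∑ _j : Fin κ, (cnt : ℝ≥0∞)^2 * tb := Finset.sum_le_sum (fun j _ => h2 j)
      _ = (κ : ℝ≥0∞) * ((cnt : ℝ≥0∞)^2 * tb) := by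
          rw [Finset.sum_const, Finset.card_univ, Fintype.card_fin, nsmul_eq_mul]
  -- convert to the real bound
  have hcntR : (cnt : ℝ) ≤ (32/ε₀ + 5) * n ^ (3*ζ) := by
    have h0 : ((2*K+1 : ℤ) : ℝ) = (cnt : ℝ) := by
      rw [hcnt]
      exact_mod_cast (Int.toNat_of_nonneg (by omega)).symm
    rw [← h0]
    have hceil : (⌈16 * n ^ (3*ζ) / ε₀⌉ : ℝ) < 16 * n ^ (3*ζ) / ε₀ + 1 := Int.ceil_lt_add_one _
    have hKr : (K : ℝ) = (⌈16 * n ^ (3*ζ) / ε₀⌉ : ℝ) + 1 := by rw [hKdef]; push_cast; ring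
    have hone' : (1:ℝ) ≤ n ^ (3*ζ) := Real.one_le_rpow hn1 (by positivity)
    have h2 : ((2*K+1 : ℤ) : ℝ) = 2*(K:ℝ) + 1 := by push_cast; ring
    rw [h2, hKr]
    have h3 : 2 * (16 * n ^ (3*ζ) / ε₀) + 5 ≤ (32/ε₀ + 5) * n ^ (3*ζ) := by
      have : 2 * (16 * n ^ (3*ζ) / ε₀) = (32/ε₀) * n ^ (3*ζ) := by ring
      rw [this]
      nlinarith
    linarith
  have htotal : Pn U ≤ ENNReal.ofReal ((κ:ℝ) * ((32/ε₀+5) * n^(3*ζ))^2 *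
      ((k:ℝ) * (n^(-c₁) * (c₂ * Real.log n)^(k-1)))) := by
    refine hPU.trans ?_
    have hbr : (0:ℝ) ≤ (k:ℝ) * (n^(-c₁) * (c₂ * Real.log n)^(k-1)) ∨ True := Or.inr trivial
    rw [htbdef]
    rcases le_or_gt 0 ((k:ℝ) * (n^(-c₁) * (c₂ * Real.log n)^(k-1))) with hpos | hneg
    · have e1 : (κ : ℝ≥0∞) = ENNReal.ofReal (κ:ℝ) := by
        rw [ENNReal.ofReal_natCast]
      have e2 : ((cnt : ℝ≥0∞))^2 = ENNReal.ofReal ((cnt:ℝ)^2) := by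
        rw [ENNReal.ofReal_pow (by positivity), ENNReal.ofReal_natCast]
      rw [e1, e2, ← ENNReal.ofReal_mul (by positivity), ← ENNReal.ofReal_mul (by positivity)]
      apply ENNReal.ofReal_le_ofReal
      have hc2 : (cnt:ℝ)^2 ≤ ((32/ε₀+5) * n^(3*ζ))^2 :=
        pow_le_pow_left₀ (by positivity) hcntR 2
      calc (κ:ℝ) * ((cnt:ℝ)^2 * ((k:ℝ) * (n^(-c₁) * (c₂ * Real.log n)^(k-1))))
          ≤ (κ:ℝ) * (((32/ε₀+5) * n^(3*ζ))^2 * ((k:ℝ) * (n^(-c₁) * (c₂ * Real.log n)^(k-1)))) := by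
            apply mul_le_mul_of_nonneg_left _ (Nat.cast_nonneg κ)
            exact mul_le_mul_of_nonneg_right hc2 hpos
        _ = (κ:ℝ) * ((32/ε₀+5) * n^(3*ζ))^2 * ((k:ℝ) * (n^(-c₁) * (c₂ * Real.log n)^(k-1))) := by
            ring
    · have : ENNReal.ofReal ((k:ℝ) * (n^(-c₁) * (c₂ * Real.log n)^(k-1))) = 0 :=
        ENNReal.ofReal_of_nonpos hneg.le
      rw [this, mul_zero, mul_zero]
      exact zero_le
  -- final inequality
  rw [tsub_le_iff_right]
  have h1 : (1:ℝ≥0∞) = Pn Set.univ := hProb.measure_univ.symm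
  have h2 : Pn Set.univ ≤ Pn U + Pn Uᶜ := by
    rw [← Set.union_compl_self U]
    exact measure_union_le _ _
  have h3 : Pn Uᶜ ≤ Pn {ω | (⋃ j, Metric.closedBall (q j) (n ^ (3*ζ) * rn)) ∩ A ⊆
      interior (coveredK 2 k rn (ηn ω))} := measure_mono hincl
  calc (1:ℝ≥0∞) = Pn Set.univ := h1
    _ ≤ Pn U + Pn Uᶜ := h2
    _ ≤ ENNReal.ofReal ((κ:ℝ) * ((32/ε₀+5) * n^(3*ζ))^2 *
          ((k:ℝ) * (n^(-c₁) * (c₂ * Real.log n)^(k-1)))) +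
        Pn {ω | (⋃ j, Metric.closedBall (q j) (n ^ (3*ζ) * rn)) ∩ A ⊆
          interior (coveredK 2 k rn (ηn ω))} := add_le_add htotal h3
    _ = _ := by rw [add_comm]

set_option maxHeartbeats 1000000 in
/-- Lemma `lemQ`: coverage of the regions near the corners of a polygon. For all small
enough `ζ > 0`, the corner region `Q_n = (⋃_j B(q_j, n^{3ζ}·r_n)) ∩ A` is covered (by open
balls) with probability tending to 1. -/
theorem polygon_corner_coverage (A : Set (EuclideanSpace ℝ (Fin 2)))
    (hAcpt : IsCompact A) (hAcl : A = closure (interior A))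
    (m : ℕ) (u v : Fin m → EuclideanSpace ℝ (Fin 2))
    (hedges : frontier A = ⋃ i, segment ℝ (u i) (v i))
    (κ : ℕ) (q : Fin κ → EuclideanSpace ℝ (Fin 2))
    (hvert : Set.range q = {x | ∃ i j : Fin m, i ≠ j ∧
      x ∈ segment ℝ (u i) (v i) ∩ segment ℝ (u j) (v j)})
    (k : ℕ) (hk : 1 ≤ k)
    (μY : Measure ℝ) [IsProbabilityMeasure μY] (hYnonneg : μY (Set.Iio 0) = 0)
    (γ : ℝ) (hγ : (2 : ℝ) < γ)
    (hmomInt : Integrable (fun y : ℝ => y ^ γ) μY) (hmomPos : 0 < ∫ y, y ^ γ ∂μY)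
    (β : ℝ) (r : ℝ → ℝ) (hr : ∀ n : ℝ, 0 < n → 0 ≤ r n)
    (hrn : Tendsto (fun n : ℝ =>
        n * Real.pi * r n ^ 2 * (∫ y, y ^ 2 ∂μY) - Real.log n
          - (2 * (k : ℝ) - 1) * Real.log (Real.log n))
      atTop (𝓝 β))
    (Ω : ℝ → Type*) [∀ n, MeasurableSpace (Ω n)] (P : ∀ n, Measure (Ω n))
    (η : ∀ n : ℝ, Ω n → Set (EuclideanSpace ℝ (Fin 2) × ℝ))
    (hη : ∀ n : ℝ, 0 < n → IsMarkedPoissonPP (P n) (mppIntensity 2 n A μY) (η n)) :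
    ∃ ζ₀ : ℝ, 0 < ζ₀ ∧ ∀ ζ : ℝ, 0 < ζ → ζ < ζ₀ →
      Tendsto (fun n : ℝ =>
          (P n) {ω | (⋃ j, Metric.closedBall (q j) (n ^ (3 * ζ) * r n)) ∩ A ⊆
            interior (coveredK 2 k (r n) (η n ω))})
        atTop (𝓝 1) := by
  classical
  obtain ⟨ε₀, hε₀, hp₀, hint2, hI₂⟩ := aux_moment μY hYnonneg γ hγ hmomInt hmomPos
  obtain ⟨c, hc, ρ₀, hρ₀, hgeo⟩ := polygon_density A hAcpt hAcl m u v hedges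
  set p₀ : ℝ := (μY (Set.Ioi ε₀)).toReal with hp₀def
  set I₂ : ℝ := ∫ y, y ^ 2 ∂μY with hI₂def
  set V : ℝ := (volume (Metric.ball (0 : E2P) 1)).toReal with hVdef
  have hπ := Real.pi_pos
  set c₁ : ℝ := c * ε₀^2 * p₀ / (128 * Real.pi * I₂) with hc₁def
  set c₂ : ℝ := ε₀^2 * V * p₀ / (8 * Real.pi * I₂) with hc₂def
  have hc₁pos : 0 < c₁ := by
    apply div_pos
    · exact mul_pos (mul_pos hc (pow_pos hε₀ 2)) hp₀
    · exact mul_pos (mul_pos (by norm_num) hπ) hI₂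
  refine ⟨c₁ / 7, by positivity, ?_⟩
  intro ζ hζ hζlt
  -- eventual bounds on n * r n ^ 2
  have hk' : (1:ℝ) ≤ 2 * (k:ℝ) - 1 := by
    have : (1:ℝ) ≤ (k:ℝ) := by exact_mod_cast hk
    linarith
  have hloglog : Tendsto (fun n : ℝ => Real.log (Real.log n) / Real.log n) atTop (𝓝 0) :=
    (Real.isLittleO_log_id_atTop.tendsto_div_nhds_zero).comp Real.tendsto_log_atTop
  have hE5 : ∀ᶠ n : ℝ in atTop,
      Real.log (Real.log n) / Real.log n ≤ 1 / (4 * (2 * (k:ℝ) - 1)) := by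
    exact hloglog.eventually_le_const (by positivity)
  have hE6 : ∀ᶠ n : ℝ in atTop, 1 ≤ Real.log n :=
    Real.tendsto_log_atTop.eventually_ge_atTop 1
  have hE7 : ∀ᶠ n : ℝ in atTop, 4 * (|β| + 1) ≤ Real.log n :=
    Real.tendsto_log_atTop.eventually_ge_atTop _
  have hβ1 : ∀ᶠ n : ℝ in atTop,
      |(n * Real.pi * r n ^ 2 * I₂ - Real.log n
        - (2 * (k:ℝ) - 1) * Real.log (Real.log n)) - β| < 1 := by
    have := Metric.tendsto_nhds.mp hrn 1 one_pos
    simpa only [Real.dist_eq] using this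
  have hE1 : ∀ᶠ n : ℝ in atTop, (1:ℝ) ≤ n := eventually_ge_atTop 1
  have hbounds : ∀ᶠ n : ℝ in atTop,
      Real.log n / (2 * Real.pi * I₂) ≤ n * r n ^ 2 ∧
      n * r n ^ 2 ≤ 2 * Real.log n / (Real.pi * I₂) ∧ 0 < r n ∧ (1:ℝ) ≤ n := by
    filter_upwards [hE1, hE5, hE6, hE7, hβ1] with n h1 h5 h6 h7 hβ'
    have hn0 : (0:ℝ) < n := lt_of_lt_of_le one_pos h1
    have hlogpos : (0:ℝ) < Real.log n := lt_of_lt_of_le one_pos h6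
    have hll0 : 0 ≤ Real.log (Real.log n) := Real.log_nonneg h6
    set g : ℝ := n * Real.pi * r n ^ 2 * I₂ with hgdef
    have habs := abs_lt.mp hβ'
    have hllb : (2 * (k:ℝ) - 1) * Real.log (Real.log n) ≤ Real.log n / 4 := by
      have heq : (2 * (k:ℝ) - 1) * Real.log (Real.log n) =
          ((2 * (k:ℝ) - 1) * (Real.log (Real.log n) / Real.log n)) * Real.log n := by
        field_simp
      rw [heq]
      have h2 : (2 * (k:ℝ) - 1) * (Real.log (Real.log n) / Real.log n) ≤
          (2 * (k:ℝ) - 1) * (1 / (4 * (2 * (k:ℝ) - 1))) :=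
        mul_le_mul_of_nonneg_left h5 (by linarith)
      have h3 : (2 * (k:ℝ) - 1) * (1 / (4 * (2 * (k:ℝ) - 1))) = 1/4 := by
        field_simp
      have h4 : (2 * (k:ℝ) - 1) * (Real.log (Real.log n) / Real.log n) * Real.log n ≤
          (1/4) * Real.log n := by
        apply mul_le_mul_of_nonneg_right _ hlogpos.le
        rw [← h3]
        exact h2
      linarith
    have hβb : |β| ≤ Real.log n / 4 - 1 := by
      have := abs_nonneg β
      linarith
    have hglb : Real.log n / 2 ≤ g := by
      have h8 : g ≥ Real.log n + (2 * (k:ℝ) - 1) * Real.log (Real.log n) + β - 1 := by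
        linarith [habs.1]
      have h9 : (2 * (k:ℝ) - 1) * Real.log (Real.log n) ≥ 0 :=
        mul_nonneg (by linarith) hll0
      have h10 : β ≥ -|β| := neg_abs_le β
      linarith
    have hgub : g ≤ 2 * Real.log n := by
      have h8 : g ≤ Real.log n + (2 * (k:ℝ) - 1) * Real.log (Real.log n) + β + 1 := by
        linarith [habs.2]
      have h10 : β ≤ |β| := le_abs_self β
      linarith
    have hgeq : g = Real.pi * I₂ * (n * r n ^ 2) := by rw [hgdef]; ring
    have hπI : 0 < Real.pi * I₂ := mul_pos hπ hI₂
    refine ⟨?_, ?_, ?_, h1⟩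
    · rw [div_le_iff₀ (by positivity)]
      nlinarith [hglb, hgeq]
    · rw [le_div_iff₀ hπI]
      nlinarith [hgub, hgeq]
    · have hnr : 0 < n * r n ^ 2 := by
        have h11 : 0 < Real.log n / (2 * Real.pi * I₂) := by positivity
        have h12 : Real.log n / (2 * Real.pi * I₂) ≤ n * r n ^ 2 := by
          rw [div_le_iff₀ (by positivity)]
          nlinarith [hglb, hgeq]
        linarith
      have hr0 : 0 ≤ r n := hr n hn0
      rcases eq_or_lt_of_le hr0 with heq | hlt
      · exfalso
        rw [← heq] at hnr
        simp at hnr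
      · exact hlt
  -- eventually r n is small
  have hrsmall : ∀ᶠ n : ℝ in atTop, ε₀ * r n / 8 ≤ ρ₀ := by
    set Bρ : ℝ := 8 * ρ₀ / ε₀ with hBρ
    have hBρpos : 0 < Bρ := by positivity
    have hlogn : Tendsto (fun n : ℝ => Real.log n / n) atTop (𝓝 0) :=
      Real.isLittleO_log_id_atTop.tendsto_div_nhds_zero
    have hsmall : ∀ᶠ n : ℝ in atTop,
        Real.log n / n ≤ Real.pi * I₂ / 2 * Bρ^2 := by
      exact hlogn.eventually_le_const (by positivity)
    filter_upwards [hbounds, hsmall, eventually_gt_atTop 0] with n hb hs hn0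
    obtain ⟨-, hub, hrpos, -⟩ := hb
    have h1 : r n ^ 2 ≤ 2 * Real.log n / (Real.pi * I₂) / n := by
      rw [div_div, le_div_iff₀ (by positivity)]
      calc r n ^ 2 * (Real.pi * I₂ * n) = (n * r n ^ 2) * (Real.pi * I₂) := by ring
        _ ≤ (2 * Real.log n / (Real.pi * I₂)) * (Real.pi * I₂) :=
            mul_le_mul_of_nonneg_right hub (by positivity)
        _ = 2 * Real.log n := by
            field_simp
    have h2 : 2 * Real.log n / (Real.pi * I₂) / n ≤ Bρ ^ 2 := by
      have : Real.log n / n ≤ Real.pi * I₂ / 2 * Bρ^2 := hs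
      rw [div_div, div_le_iff₀ (by positivity)]
      calc 2 * Real.log n = 2 * (Real.log n / n) * n := by field_simp
        _ ≤ 2 * (Real.pi * I₂ / 2 * Bρ^2) * n := by
            apply mul_le_mul_of_nonneg_right _ hn0.le
            linarith
        _ = Bρ ^ 2 * (Real.pi * I₂ * n) := by ring
    have h3 : r n ^ 2 ≤ Bρ ^ 2 := h1.trans h2
    have h4 : r n ≤ Bρ := by nlinarith [hrpos.le, hBρpos]
    calc ε₀ * r n / 8 ≤ ε₀ * Bρ / 8 := by
          apply div_le_div_of_nonneg_right _ (by norm_num)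
          exact mul_le_mul_of_nonneg_left h4 hε₀.le
      _ = ρ₀ := by rw [hBρ]; field_simp
  have hE2 : ∀ᶠ n : ℝ in atTop, 1 ≤ c₁ * Real.log n := by
    have := Real.tendsto_log_atTop.eventually_ge_atTop (1/c₁)
    filter_upwards [this] with n hn
    rw [← div_le_iff₀' hc₁pos] at *
    linarith
  -- the real bound function
  set bfun : ℝ → ℝ := fun n => (κ:ℝ) * ((32/ε₀+5) * n^(3*ζ))^2 *
      ((k:ℝ) * (n^(-c₁) * (c₂ * Real.log n)^(k-1))) with hbfun
  -- main eventual inequality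
  have hmain : ∀ᶠ n : ℝ in atTop,
      1 - ENNReal.ofReal (bfun n) ≤ (P n) {ω | (⋃ j, Metric.closedBall (q j)
          (n ^ (3 * ζ) * r n)) ∩ A ⊆ interior (coveredK 2 k (r n) (η n ω))} ∧
      (P n) {ω | (⋃ j, Metric.closedBall (q j) (n ^ (3 * ζ) * r n)) ∩ A ⊆
          interior (coveredK 2 k (r n) (η n ω))} ≤ 1 := by
    filter_upwards [hbounds, hrsmall, hE2] with n hb hρs h2
    obtain ⟨hlb, hub, hrpos, hn1⟩ := hb
    have hn0 : (0:ℝ) < n := lt_of_lt_of_le one_pos hn1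
    obtain ⟨hProb, hPois, -⟩ := hη n hn0
    constructor
    · -- apply per_n_bound
      have hLB : c₁ * Real.log n ≤ n * (c * (ε₀ * r n / 8) ^ 2) * p₀ := by
        have e1 : n * (c * (ε₀ * r n / 8) ^ 2) * p₀ =
            (n * r n ^ 2) * (c * ε₀^2 * p₀ / 64) := by ring
        have e2 : (Real.log n / (2 * Real.pi * I₂)) * (c * ε₀^2 * p₀ / 64) =
            c₁ * Real.log n := by
          rw [hc₁def]
          field_simp
          ring
        rw [e1, ← e2]
        apply mul_le_mul_of_nonneg_right hlb
        positivity
      have hUB : n * ((ε₀ * r n / 4) ^ 2 * V) * p₀ ≤ c₂ * Real.log n := by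
        have e1 : n * ((ε₀ * r n / 4) ^ 2 * V) * p₀ =
            (n * r n ^ 2) * (ε₀^2 * V * p₀ / 16) := by ring
        have e2 : (2 * Real.log n / (Real.pi * I₂)) * (ε₀^2 * V * p₀ / 16) =
            c₂ * Real.log n := by
          rw [hc₂def]
          field_simp
          ring
        rw [e1, ← e2]
        apply mul_le_mul_of_nonneg_right hub
        have hV : 0 ≤ V := ENNReal.toReal_nonneg
        positivity
      exact per_n_bound A μY k hk κ q ε₀ c ρ₀ c₁ c₂ ζ hε₀ hc hζ n (r n) hn1 hrpos
        (Ω n) (P n) (η n) hProb hPois hgeo hρs hLB hUB h2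
    · haveI := hProb
      exact prob_le_one
  -- the bound tends to zero
  have hbtend : Tendsto bfun atTop (𝓝 0) := by
    have hs : 0 < c₁ - 6*ζ := by linarith
    have hcore : Tendsto (fun x : ℝ => (Real.log x)^(k-1) * x^(6*ζ - c₁)) atTop (𝓝 0) := by
      have hlo := (isLittleO_log_rpow_rpow_atTop ((k-1:ℕ):ℝ) hs).tendsto_div_nhds_zero
      apply hlo.congr'
      filter_upwards [eventually_gt_atTop 0] with x hx
      rw [Real.rpow_natCast, div_eq_mul_inv, ← Real.rpow_neg hx.le, neg_sub]
    set C : ℝ := (κ:ℝ) * (32/ε₀+5)^2 * (k:ℝ) * c₂^(k-1) with hC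
    have heq : ∀ᶠ n : ℝ in atTop,
        C * ((Real.log n)^(k-1) * n^(6*ζ - c₁)) = bfun n := by
      filter_upwards [eventually_ge_atTop 1] with n hn1
      have hn0 : (0:ℝ) < n := lt_of_lt_of_le one_pos hn1
      have e1 : (n^(3*ζ))^2 = n^(6*ζ) := by
        rw [← Real.rpow_natCast (n^(3*ζ)) 2, ← Real.rpow_mul hn0.le]
        norm_num
        ring_nf
      have e2 : n^(6*ζ) * n^(-c₁) = n^(6*ζ - c₁) := by
        rw [← Real.rpow_add hn0]
        ring_nf
      rw [hbfun, hC]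
      simp only
      rw [mul_pow (32/ε₀+5) (n^(3*ζ)) 2, e1, mul_pow c₂ (Real.log n) (k-1), ← e2]
      ring
    have := (hcore.const_mul C).congr' heq
    simpa using this
  have hofReal : Tendsto (fun n => ENNReal.ofReal (bfun n)) atTop (𝓝 0) := by
    have := ENNReal.tendsto_ofReal hbtend
    simpa using this
  have hlowtend : Tendsto (fun n : ℝ => 1 - ENNReal.ofReal (bfun n)) atTop (𝓝 1) := by
    have h := ENNReal.Tendsto.sub (tendsto_const_nhds (x := (1:ℝ≥0∞))) hofReal
      (Or.inl ENNReal.one_ne_top)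
    simpa using h
  exact tendsto_of_tendsto_of_tendsto_of_le_of_le' hlowtend tendsto_const_nhds
    (hmain.mono fun n h => h.1) (hmain.mono fun n h => h.2)

end
end
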